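/- arXiv:1802.04778 — 5 statements merged into one kernel-verified Lean document; each statement's English description precedes it below -/
import Mathlib

section
/- Assume μ1, μ2, σ1, σ2 > 0 and ρ ∈ (−1,1). Let g(x) := ∫₀^∞ s·f(x·s, s) ds and P(Q1) := ∫₀^∞∫₀^∞ f(s1,s2) ds1 ds2, where f is the bivariate normal density with parameters μ1, μ2, σ1, σ2, ρ. Then the conditional density F(x) := g(x)/P(Q1) of the quotient X1/X2 on the first quadrant satisfies lim_{x → ∞} log F(x) / log x = −2. -/
open Real MeasureTheory Set

/-- The bivariate normal density with means `μ1, μ2`, standard deviations `σ1, σ2`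
and correlation `ρ`. -/
noncomputable def bvnDensity (μ1 μ2 σ1 σ2 ρ : ℝ) (s1 s2 : ℝ) : ℝ :=
  (2 * π * σ1 * σ2 * Real.sqrt (1 - ρ ^ 2))⁻¹ *
    Real.exp (-(1 / 2) * (((s2 - μ2) / σ2) ^ 2 +
      (s1 - μ1 - ρ * (σ1 / σ2) * (s2 - μ2)) ^ 2 / (σ1 ^ 2 * (1 - ρ ^ 2))))

/-- The complementary error function. -/
noncomputable def erfc (z : ℝ) : ℝ :=
  (2 / Real.sqrt π) * ∫ u in Set.Ioi z, Real.exp (-u ^ 2)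

/-- `h(ω) = 1 − √π · ω · exp(ω²) · erfc(ω)`. -/
noncomputable def hfun (ω : ℝ) : ℝ :=
  1 - Real.sqrt π * ω * Real.exp (ω ^ 2) * erfc ω

/-- The coefficient `A(x)`. -/
noncomputable def coefA (σ1 σ2 ρ : ℝ) (x : ℝ) : ℝ :=
  1 / σ2 ^ 2 + (x - ρ * σ1 / σ2) ^ 2 / (σ1 ^ 2 * (1 - ρ ^ 2))

/-- The coefficient `B(x)`. -/
noncomputable def coefB (μ1 μ2 σ1 σ2 ρ : ℝ) (x : ℝ) : ℝ :=
  -μ2 / σ2 ^ 2 + (x - ρ * σ1 / σ2) * (μ2 * ρ * σ1 / σ2 - μ1) / (σ1 ^ 2 * (1 - ρ ^ 2))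

/-- The constant `C`. -/
noncomputable def coefC (μ1 μ2 σ1 σ2 ρ : ℝ) : ℝ :=
  μ2 ^ 2 / σ2 ^ 2 + (ρ * μ2 / σ2 - μ1 / σ1) ^ 2 / (1 - ρ ^ 2)

/-- `ω(x) = B(x)/√(2A(x))`. -/
noncomputable def omegaFun (μ1 μ2 σ1 σ2 ρ : ℝ) (x : ℝ) : ℝ :=
  coefB μ1 μ2 σ1 σ2 ρ x / Real.sqrt (2 * coefA σ1 σ2 ρ x)

/-- `g(x) = ∫₀^∞ s f(xs, s) ds`, the unnormalized first-quadrant quotient density. -/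
noncomputable def quotDensQ1 (μ1 μ2 σ1 σ2 ρ : ℝ) (x : ℝ) : ℝ :=
  ∫ s in Set.Ioi (0 : ℝ), s * bvnDensity μ1 μ2 σ1 σ2 ρ (x * s) s

/-- `P(Q1) = ∫₀^∞ ∫₀^∞ f(s1, s2) ds1 ds2`. -/
noncomputable def probQ1 (μ1 μ2 σ1 σ2 ρ : ℝ) : ℝ :=
  ∫ s2 in Set.Ioi (0 : ℝ), ∫ s1 in Set.Ioi (0 : ℝ), bvnDensity μ1 μ2 σ1 σ2 ρ s1 s2

lemma myInt_lin_gauss {b : ℝ} (hb : 0 < b) (c : ℝ) :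
    Integrable (fun s : ℝ => s * Real.exp (-b * (s - c) ^ 2)) := by
  have h1 : Integrable (fun u : ℝ => u * Real.exp (-b * u ^ 2) + c * Real.exp (-b * u ^ 2)) :=
    (integrable_mul_exp_neg_mul_sq hb).add ((integrable_exp_neg_mul_sq hb).const_mul c)
  have h2 := h1.comp_sub_right c
  convert h2 using 2 with s
  ring

lemma myInt_lin_gauss_scaled {b : ℝ} (hb : 0 < b) (c : ℝ) {y : ℝ} (hy : 0 < y) :
    Integrable (fun s : ℝ => s * Real.exp (-b * (y * s - c) ^ 2)) := by
  have h2 := ((myInt_lin_gauss hb c).comp_mul_left' hy.ne').const_mul y⁻¹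
  convert h2 using 2 with s
  rw [← mul_assoc, inv_mul_cancel_left₀ hy.ne']

lemma myIntegral_scaled (b c : ℝ) {y : ℝ} (hy : 0 < y) :
    ∫ s in Ioi (0:ℝ), s * Real.exp (-b * (y * s - c) ^ 2)
      = y⁻¹ * (y⁻¹ * ∫ t in Ioi (0:ℝ), t * Real.exp (-b * (t - c) ^ 2)) := by
  have h := integral_comp_mul_left_Ioi
      (fun t : ℝ => t * Real.exp (-b * (t - c) ^ 2)) 0 hy
  rw [mul_zero] at h
  have h2 : ∫ s in Ioi (0:ℝ), s * Real.exp (-b * (y * s - c) ^ 2)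
      = ∫ s in Ioi (0:ℝ), y⁻¹ * ((y * s) * Real.exp (-b * (y * s - c) ^ 2)) := by
    congr 1 with s
    rw [← mul_assoc, inv_mul_cancel_left₀ hy.ne']
  rw [h2, MeasureTheory.integral_const_mul, h, smul_eq_mul]


set_option maxHeartbeats 1000000 in
theorem log_conditional_density_tendsto_neg_two
    (μ1 μ2 σ1 σ2 ρ : ℝ) (hμ1 : 0 < μ1) (hμ2 : 0 < μ2) (hσ1 : 0 < σ1) (hσ2 : 0 < σ2)
    (hρ : ρ ∈ Set.Ioo (-1 : ℝ) 1) :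
    Filter.Tendsto
      (fun x : ℝ =>
        Real.log (quotDensQ1 μ1 μ2 σ1 σ2 ρ x / probQ1 μ1 μ2 σ1 σ2 ρ) / Real.log x)
      Filter.atTop (nhds (-2)) := by
  obtain ⟨hρ1, hρ2⟩ := hρ
  have hρsq : 0 < 1 - ρ ^ 2 := by nlinarith
  set r : ℝ := ρ * σ1 / σ2 with hr
  set c : ℝ := μ1 - r * μ2 with hc
  set v : ℝ := σ1 ^ 2 * (1 - ρ ^ 2) with hv
  have hvpos : 0 < v := by positivity
  set b : ℝ := (2 * v)⁻¹ with hb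
  have hbpos : 0 < b := by positivity
  set K : ℝ := (2 * π * σ1 * σ2 * Real.sqrt (1 - ρ ^ 2))⁻¹ with hK
  have hKpos : 0 < K := by
    have h1 : (0:ℝ) < Real.sqrt (1 - ρ ^ 2) := Real.sqrt_pos.mpr hρsq
    have h2 := Real.pi_pos
    positivity
  -- splitting of the density
  have hsplit : ∀ s1 s2 : ℝ, bvnDensity μ1 μ2 σ1 σ2 ρ s1 s2
      = K * (Real.exp (-(1/2) * ((s2 - μ2)/σ2) ^ 2)
          * Real.exp (-b * (s1 - (μ1 + r * (s2 - μ2))) ^ 2)) := by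
    intro s1 s2
    simp only [bvnDensity, hK, hb, hv, hr, ← Real.exp_add]
    congr 1
    field_simp
    ring
  have hbvn_nonneg : ∀ s1 s2 : ℝ, 0 ≤ bvnDensity μ1 μ2 σ1 σ2 ρ s1 s2 := by
    intro s1 s2
    rw [hsplit]
    positivity
  have hconv : ∀ x s : ℝ, s * bvnDensity μ1 μ2 σ1 σ2 ρ (x*s) s
      = (K * Real.exp (-(1/2) * ((s - μ2)/σ2) ^ 2))
        * (s * Real.exp (-b * ((x - r)*s - c) ^ 2)) := by
    intro x s
    rw [hsplit]
    have h1 : x*s - (μ1 + r*(s - μ2)) = (x - r)*s - c := by rw [hc]; ring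
    rw [h1]; ring
  have hInt : ∀ x : ℝ, 0 < x - r →
      Integrable (fun s => s * bvnDensity μ1 μ2 σ1 σ2 ρ (x*s) s) := by
    intro x hy
    have hg := myInt_lin_gauss_scaled hbpos c hy
    have hmeas : AEStronglyMeasurable
        (fun s : ℝ => K * Real.exp (-(1/2) * ((s - μ2)/σ2) ^ 2)) volume := by
      apply Continuous.aestronglyMeasurable
      fun_prop
    have hbdd : ∃ C, ∀ s : ℝ, ‖K * Real.exp (-(1/2) * ((s - μ2)/σ2) ^ 2)‖ ≤ C := by
      refine ⟨K, fun s => ?_⟩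
      rw [Real.norm_eq_abs, abs_of_nonneg (by positivity)]
      nth_rewrite 2 [show K = K * 1 by ring]
      apply mul_le_mul_of_nonneg_left _ hKpos.le
      exact Real.exp_le_one_iff.mpr (by nlinarith [sq_nonneg ((s - μ2)/σ2)])
    have h2 := hg.bdd_mul hmeas (Filter.Eventually.of_forall hbdd.choose_spec)
    apply h2.congr
    filter_upwards with s
    rw [hconv]
  -- the constant C₀
  set C₀ : ℝ := ∫ t in Ioi (0:ℝ), t * Real.exp (-b * (t - c) ^ 2) with hC₀
  have hC₀nonneg : 0 ≤ C₀ := by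
    apply setIntegral_nonneg measurableSet_Ioi
    intro t ht
    exact mul_nonneg (le_of_lt ht) (Real.exp_pos _).le
  -- upper bound
  have hupper : ∀ x : ℝ, 0 < x - r → quotDensQ1 μ1 μ2 σ1 σ2 ρ x
      ≤ K * ((x - r)⁻¹ * ((x - r)⁻¹ * C₀)) := by
    intro x hy
    have hIb : IntegrableOn (fun s : ℝ => K * (s * Real.exp (-b * ((x - r)*s - c) ^ 2)))
        (Ioi 0) := ((myInt_lin_gauss_scaled hbpos c hy).const_mul K).integrableOn
    have h1 : quotDensQ1 μ1 μ2 σ1 σ2 ρ x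
        ≤ ∫ s in Ioi (0:ℝ), K * (s * Real.exp (-b * ((x - r)*s - c) ^ 2)) := by
      apply setIntegral_mono_on (hInt x hy).integrableOn hIb measurableSet_Ioi
      intro s hs
      rw [hconv]
      apply mul_le_mul_of_nonneg_right _
        (mul_nonneg (le_of_lt hs) (Real.exp_pos _).le)
      nth_rewrite 2 [show K = K * 1 by ring]
      exact mul_le_mul_of_nonneg_left (Real.exp_le_one_iff.mpr (by nlinarith [sq_nonneg ((s - μ2)/σ2)])) hKpos.le
    calc quotDensQ1 μ1 μ2 σ1 σ2 ρ x
        ≤ ∫ s in Ioi (0:ℝ), K * (s * Real.exp (-b * ((x - r)*s - c) ^ 2)) := h1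
      _ = K * ((x - r)⁻¹ * ((x - r)⁻¹ * C₀)) := by
          rw [MeasureTheory.integral_const_mul, myIntegral_scaled b c hy]
  -- lower bound
  set K' : ℝ := K * (Real.exp (-(1/2) * ((1+μ2)/σ2) ^ 2)
      * Real.exp (-b * (1 + |r| + |c|) ^ 2)) with hK'
  have hK'pos : 0 < K' := by positivity
  have hlower : ∀ x : ℝ, 1 ≤ x → 0 < x - r →
      K' * ((x⁻¹)^2/2) ≤ quotDensQ1 μ1 μ2 σ1 σ2 ρ x := by
    intro x h1x hy
    have hx0 : (0:ℝ) < x := lt_of_lt_of_le zero_lt_one h1x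
    have hxi : x⁻¹ ≤ 1 := inv_le_one_of_one_le₀ h1x
    have hxipos : (0:ℝ) < x⁻¹ := by positivity
    have hpoint : ∀ s ∈ Ioo (0:ℝ) x⁻¹, K' * s ≤ s * bvnDensity μ1 μ2 σ1 σ2 ρ (x*s) s := by
      intro s hs
      obtain ⟨hs0, hs1⟩ := hs
      have hsle1 : s ≤ 1 := le_trans hs1.le hxi
      have hxs : x * s ≤ 1 := by
        have h := mul_lt_mul_of_pos_left hs1 hx0
        rw [mul_inv_cancel₀ hx0.ne'] at h
        linarith
      have e1b : Real.exp (-(1/2) * ((1+μ2)/σ2) ^ 2)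
          ≤ Real.exp (-(1/2) * ((s - μ2)/σ2) ^ 2) := by
        apply Real.exp_le_exp.mpr
        have hsq : (s - μ2)^2 ≤ (1+μ2)^2 := sq_le_sq' (by linarith) (by linarith)
        rw [div_pow, div_pow]
        have hd : (s - μ2)^2/σ2^2 ≤ (1+μ2)^2/σ2^2 :=
          (div_le_div_iff_of_pos_right (by positivity)).mpr hsq
        linarith
      have e2b : Real.exp (-b * (1 + |r| + |c|) ^ 2)
          ≤ Real.exp (-b * ((x - r)*s - c) ^ 2) := by
        apply Real.exp_le_exp.mpr
        have h1' : |(x - r)*s| ≤ 1 + |r| := by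
          rw [sub_mul]
          calc |x*s - r*s| ≤ |x*s| + |r*s| := abs_sub _ _
            _ ≤ 1 + |r| := by
              rw [abs_of_nonneg (by positivity), abs_mul, abs_of_nonneg hs0.le]
              have : |r| * s ≤ |r| * 1 := mul_le_mul_of_nonneg_left hsle1 (abs_nonneg r)
              linarith
        have habs : |(x - r)*s - c| ≤ 1 + |r| + |c| := by
          calc |(x - r)*s - c| ≤ |(x - r)*s| + |c| := abs_sub _ _
            _ ≤ 1 + |r| + |c| := by linarith
        obtain ⟨ha1, ha2⟩ := abs_le.mp habs
        have hsq2 : ((x - r)*s - c)^2 ≤ (1 + |r| + |c|)^2 := sq_le_sq' ha1 ha2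
        have hm := mul_le_mul_of_nonneg_left hsq2 hbpos.le
        linarith
      calc K' * s = s * (K * (Real.exp (-(1/2) * ((1+μ2)/σ2) ^ 2)
              * Real.exp (-b * (1 + |r| + |c|) ^ 2))) := by rw [hK']; ring
        _ ≤ s * (K * (Real.exp (-(1/2) * ((s - μ2)/σ2) ^ 2)
              * Real.exp (-b * ((x - r)*s - c) ^ 2))) := by
            apply mul_le_mul_of_nonneg_left _ hs0.le
            apply mul_le_mul_of_nonneg_left _ hKpos.le
            exact mul_le_mul e1b e2b (Real.exp_pos _).le (Real.exp_pos _).le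
        _ = s * bvnDensity μ1 μ2 σ1 σ2 ρ (x*s) s := by rw [hconv]; ring
    have hK'sInt : IntegrableOn (fun s : ℝ => K' * s) (Ioo (0:ℝ) x⁻¹) :=
      ((continuous_const.mul continuous_id).integrableOn_Icc).mono_set Ioo_subset_Icc_self
    have hIoo : ∫ s in Ioo (0:ℝ) x⁻¹, K' * s
        ≤ ∫ s in Ioo (0:ℝ) x⁻¹, s * bvnDensity μ1 μ2 σ1 σ2 ρ (x*s) s :=
      setIntegral_mono_on hK'sInt ((hInt x hy).integrableOn) measurableSet_Ioo hpoint
    have hval : ∫ s in Ioo (0:ℝ) x⁻¹, K' * s = K' * ((x⁻¹)^2/2) := by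
      rw [MeasureTheory.integral_const_mul]
      congr 1
      rw [← integral_Ioc_eq_integral_Ioo,
        ← intervalIntegral.integral_of_le hxipos.le, integral_id]
      ring
    have hmono : ∫ s in Ioo (0:ℝ) x⁻¹, s * bvnDensity μ1 μ2 σ1 σ2 ρ (x*s) s
        ≤ quotDensQ1 μ1 μ2 σ1 σ2 ρ x := by
      apply setIntegral_mono_set (hInt x hy).integrableOn
      · filter_upwards [ae_restrict_mem measurableSet_Ioi] with s hs
        exact mul_nonneg (le_of_lt hs) (hbvn_nonneg _ _)
      · exact HasSubset.Subset.eventuallyLE Ioo_subset_Ioi_self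
    linarith
  -- positivity of probQ1
  have hInner : ∀ s2 : ℝ, Integrable (fun s1 => bvnDensity μ1 μ2 σ1 σ2 ρ s1 s2) := by
    intro s2
    have h1 := ((integrable_exp_neg_mul_sq hbpos).comp_sub_right (μ1 + r*(s2 - μ2))).const_mul
      (K * Real.exp (-(1/2) * ((s2 - μ2)/σ2) ^ 2))
    apply h1.congr
    filter_upwards with s1
    rw [hsplit]
    ring
  set F : ℝ → ℝ := fun s2 => ∫ s1 in Ioi (0:ℝ), bvnDensity μ1 μ2 σ1 σ2 ρ s1 s2 with hF
  have hFnonneg : ∀ s2, 0 ≤ F s2 := fun s2 =>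
    setIntegral_nonneg measurableSet_Ioi (fun s1 _ => hbvn_nonneg s1 s2)
  have hcont : Continuous (fun p : ℝ × ℝ => bvnDensity μ1 μ2 σ1 σ2 ρ p.2 p.1) := by
    simp only [bvnDensity]
    fun_prop
  have hFmeas : StronglyMeasurable F := by
    rw [hF]
    exact (hcont.stronglyMeasurable).integral_prod_right'
  set I : ℝ := ∫ u : ℝ, Real.exp (-b * u ^ 2) with hI
  have hFle : ∀ s2, F s2 ≤ (K * Real.exp (-(1/2) * ((s2 - μ2)/σ2) ^ 2)) * I := by
    intro s2
    have h0 : F s2 ≤ ∫ s1, bvnDensity μ1 μ2 σ1 σ2 ρ s1 s2 :=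
      setIntegral_le_integral (hInner s2)
        (Filter.Eventually.of_forall (fun s1 => hbvn_nonneg s1 s2))
    have h1 : ∫ s1, bvnDensity μ1 μ2 σ1 σ2 ρ s1 s2
        = (K * Real.exp (-(1/2) * ((s2 - μ2)/σ2) ^ 2)) * I := by
      calc ∫ s1, bvnDensity μ1 μ2 σ1 σ2 ρ s1 s2
          = ∫ s1, (K * Real.exp (-(1/2) * ((s2 - μ2)/σ2) ^ 2))
              * Real.exp (-b * (s1 - (μ1 + r*(s2 - μ2))) ^ 2) := by
            congr 1 with s1; rw [hsplit]; ring
        _ = (K * Real.exp (-(1/2) * ((s2 - μ2)/σ2) ^ 2))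
              * ∫ s1, Real.exp (-b * (s1 - (μ1 + r*(s2 - μ2))) ^ 2) :=
            MeasureTheory.integral_const_mul _ _
        _ = (K * Real.exp (-(1/2) * ((s2 - μ2)/σ2) ^ 2)) * I := by
            rw [hI, integral_sub_right_eq_self (fun u : ℝ => Real.exp (-b * u ^ 2))
              (μ1 + r*(s2 - μ2))]
    linarith
  have hb2pos : (0:ℝ) < (2*σ2^2)⁻¹ := by positivity
  have hexp2 : ∀ t : ℝ, Real.exp (-(1/2) * ((t - μ2)/σ2) ^ 2)
      = Real.exp (-(2*σ2^2)⁻¹ * (t - μ2) ^ 2) := by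
    intro t; congr 1; field_simp
  have hGint : Integrable (fun s2 => (K * Real.exp (-(1/2) * ((s2 - μ2)/σ2) ^ 2)) * I) := by
    have h1 := ((integrable_exp_neg_mul_sq hb2pos).comp_sub_right μ2).const_mul (K * I)
    apply h1.congr
    filter_upwards with s2
    rw [hexp2]; ring
  have hFint : IntegrableOn F (Ioi (0:ℝ)) := by
    apply Integrable.mono' hGint.integrableOn hFmeas.aestronglyMeasurable.restrict
    apply Filter.Eventually.of_forall
    intro s2
    rw [Real.norm_eq_abs, abs_of_nonneg (hFnonneg s2)]
    exact hFle s2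
  set ε' : ℝ := K * (Real.exp (-(1/2) * ((1+μ2)/σ2) ^ 2)
      * Real.exp (-b * (1 + μ1 + |r| * (1+μ2)) ^ 2)) with hε'
  have hε'pos : 0 < ε' := by positivity
  have hFlow : ∀ s2 ∈ Ioo (0:ℝ) 1, ε' ≤ F s2 := by
    intro s2 hs2
    have hpoint2 : ∀ s1 ∈ Ioo (0:ℝ) 1, ε' ≤ bvnDensity μ1 μ2 σ1 σ2 ρ s1 s2 := by
      intro s1 hs1
      have e1b : Real.exp (-(1/2) * ((1+μ2)/σ2) ^ 2)
          ≤ Real.exp (-(1/2) * ((s2 - μ2)/σ2) ^ 2) := by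
        apply Real.exp_le_exp.mpr
        have hsq : (s2 - μ2)^2 ≤ (1+μ2)^2 :=
          sq_le_sq' (by nlinarith [hs2.1, hs2.2]) (by nlinarith [hs2.1, hs2.2])
        rw [div_pow, div_pow]
        have hd : (s2 - μ2)^2/σ2^2 ≤ (1+μ2)^2/σ2^2 :=
          (div_le_div_iff_of_pos_right (by positivity)).mpr hsq
        linarith
      have habs : |s1 - (μ1 + r*(s2 - μ2))| ≤ 1 + μ1 + |r| * (1+μ2) := by
        have h2 : |s2 - μ2| ≤ 1 + μ2 :=
          abs_le.mpr ⟨by nlinarith [hs2.1, hs2.2], by nlinarith [hs2.1, hs2.2]⟩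
        have h3 : |μ1 + r*(s2 - μ2)| ≤ μ1 + |r| * (1+μ2) := by
          calc |μ1 + r*(s2 - μ2)| ≤ |μ1| + |r*(s2 - μ2)| := abs_add_le _ _
            _ = μ1 + |r| * |s2 - μ2| := by rw [abs_of_pos hμ1, abs_mul]
            _ ≤ μ1 + |r| * (1+μ2) := by
                have := mul_le_mul_of_nonneg_left h2 (abs_nonneg r)
                linarith
        calc |s1 - (μ1 + r*(s2 - μ2))| ≤ |s1| + |μ1 + r*(s2 - μ2)| := abs_sub _ _
          _ ≤ 1 + μ1 + |r| * (1+μ2) := by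
              rw [abs_of_pos hs1.1]
              have := hs1.2
              linarith
      have e2b : Real.exp (-b * (1 + μ1 + |r| * (1+μ2)) ^ 2)
          ≤ Real.exp (-b * (s1 - (μ1 + r*(s2 - μ2))) ^ 2) := by
        apply Real.exp_le_exp.mpr
        obtain ⟨ha1, ha2⟩ := abs_le.mp habs
        have hsq2 : (s1 - (μ1 + r*(s2 - μ2)))^2 ≤ (1 + μ1 + |r| * (1+μ2))^2 :=
          sq_le_sq' ha1 ha2
        have hm := mul_le_mul_of_nonneg_left hsq2 hbpos.le
        linarith
      calc ε' = K * (Real.exp (-(1/2) * ((1+μ2)/σ2) ^ 2)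
            * Real.exp (-b * (1 + μ1 + |r| * (1+μ2)) ^ 2)) := by rw [hε']
        _ ≤ K * (Real.exp (-(1/2) * ((s2 - μ2)/σ2) ^ 2)
            * Real.exp (-b * (s1 - (μ1 + r*(s2 - μ2))) ^ 2)) := by
            apply mul_le_mul_of_nonneg_left _ hKpos.le
            exact mul_le_mul e1b e2b (Real.exp_pos _).le (Real.exp_pos _).le
        _ = bvnDensity μ1 μ2 σ1 σ2 ρ s1 s2 := (hsplit s1 s2).symm
    have m1 : ∫ s1 in Ioo (0:ℝ) 1, bvnDensity μ1 μ2 σ1 σ2 ρ s1 s2 ≤ F s2 :=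
      setIntegral_mono_set (hInner s2).integrableOn
        (Filter.Eventually.of_forall (fun s1 => hbvn_nonneg s1 s2))
        (HasSubset.Subset.eventuallyLE Ioo_subset_Ioi_self)
    have m2 : ∫ s1 in Ioo (0:ℝ) 1, (ε':ℝ)
        ≤ ∫ s1 in Ioo (0:ℝ) 1, bvnDensity μ1 μ2 σ1 σ2 ρ s1 s2 :=
      setIntegral_mono_on (integrableOn_const measure_Ioo_lt_top.ne)
        (hInner s2).integrableOn measurableSet_Ioo hpoint2
    have m3 : ∫ s1 in Ioo (0:ℝ) 1, (ε':ℝ) = ε' := by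
      rw [setIntegral_const, Real.volume_real_Ioo]
      norm_num
    linarith
  have hPeq : probQ1 μ1 μ2 σ1 σ2 ρ = ∫ s2 in Ioi (0:ℝ), F s2 := by
    simp only [probQ1, hF]
  have hPpos : 0 < probQ1 μ1 μ2 σ1 σ2 ρ := by
    rw [hPeq]
    have m1 : ∫ s2 in Ioo (0:ℝ) 1, F s2 ≤ ∫ s2 in Ioi (0:ℝ), F s2 :=
      setIntegral_mono_set hFint (Filter.Eventually.of_forall hFnonneg)
        (HasSubset.Subset.eventuallyLE Ioo_subset_Ioi_self)
    have m2 : ∫ s2 in Ioo (0:ℝ) 1, (ε':ℝ) ≤ ∫ s2 in Ioo (0:ℝ) 1, F s2 :=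
      setIntegral_mono_on (integrableOn_const measure_Ioo_lt_top.ne)
        (hFint.mono_set Ioo_subset_Ioi_self) measurableSet_Ioo
        (fun s2 hs2 => hFlow s2 hs2)
    have m3 : ∫ s2 in Ioo (0:ℝ) 1, (ε':ℝ) = ε' := by
      rw [setIntegral_const, Real.volume_real_Ioo]
      norm_num
    linarith
  -- combined two-sided bounds
  have hXbound : ∀ x : ℝ, max 2 (2*(|r|+1)) ≤ x →
      K'/2 * (x⁻¹)^2 ≤ quotDensQ1 μ1 μ2 σ1 σ2 ρ x ∧
      quotDensQ1 μ1 μ2 σ1 σ2 ρ x ≤ 4*K*(C₀+1) * (x⁻¹)^2 := by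
    intro x hx
    have hx2 : (2:ℝ) ≤ x := le_trans (le_max_left _ _) hx
    have hxr : 2*(|r|+1) ≤ x := le_trans (le_max_right _ _) hx
    have hx0 : (0:ℝ) < x := by linarith
    have habsr : r ≤ |r| := le_abs_self r
    have hy : 0 < x - r := by linarith [abs_nonneg r]
    have hyx : x/2 ≤ x - r := by linarith
    constructor
    · have h := hlower x (by linarith) hy
      have he : K'/2 * (x⁻¹)^2 = K' * ((x⁻¹)^2/2) := by ring
      rw [he]; exact h
    · have h := hupper x hy
      have h2x : (0:ℝ) < x/2 := by linarith
      have hinv : (x - r)⁻¹ ≤ 2*x⁻¹ := by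
        calc (x - r)⁻¹ ≤ (x/2)⁻¹ := by
              apply inv_anti₀ h2x hyx
          _ = 2*x⁻¹ := by rw [inv_div]; rw [div_eq_mul_inv]
      have hinv0 : (0:ℝ) ≤ (x - r)⁻¹ := by positivity
      have hsq : (x - r)⁻¹ * (x - r)⁻¹ ≤ (2*x⁻¹)*(2*x⁻¹) :=
        mul_le_mul hinv hinv hinv0 (by positivity)
      have hfin : K * ((x - r)⁻¹ * ((x - r)⁻¹ * C₀)) ≤ 4*K*(C₀+1) * (x⁻¹)^2 := by
        have h1 := mul_le_mul_of_nonneg_right hsq (mul_nonneg hKpos.le hC₀nonneg)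
        nlinarith [mul_nonneg hKpos.le (sq_nonneg x⁻¹)]
      linarith
  -- the limit
  have haux : ∀ C : ℝ, Filter.Tendsto (fun x : ℝ => C * (Real.log x)⁻¹ + (-2))
      Filter.atTop (nhds (-2)) := by
    intro C
    have h1 : Filter.Tendsto (fun x : ℝ => (Real.log x)⁻¹) Filter.atTop (nhds 0) :=
      Real.tendsto_log_atTop.inv_tendsto_atTop
    have h2 := (h1.const_mul C).add_const (-2)
    simpa using h2
  refine tendsto_of_tendsto_of_tendsto_of_le_of_le'
    (haux (Real.log (K'/2) - Real.log (probQ1 μ1 μ2 σ1 σ2 ρ)))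
    (haux (Real.log (4*K*(C₀+1)) - Real.log (probQ1 μ1 μ2 σ1 σ2 ρ))) ?_ ?_
  · filter_upwards [Filter.eventually_ge_atTop (max 2 (2*(|r|+1))),
      Filter.eventually_ge_atTop (Real.exp 1)] with x hx hxe
    obtain ⟨hgl, hgu⟩ := hXbound x hx
    have hx0 : (0:ℝ) < x := lt_of_lt_of_le (Real.exp_pos 1) hxe
    have hlx : 1 ≤ Real.log x := (Real.le_log_iff_exp_le hx0).mpr (by simpa using hxe)
    have hlx0 : 0 < Real.log x := by linarith
    have hxinv : (0:ℝ) < x⁻¹ := by positivity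
    have hgpos : 0 < quotDensQ1 μ1 μ2 σ1 σ2 ρ x := lt_of_lt_of_le (by positivity) hgl
    have hlogd : Real.log (quotDensQ1 μ1 μ2 σ1 σ2 ρ x / probQ1 μ1 μ2 σ1 σ2 ρ)
        = Real.log (quotDensQ1 μ1 μ2 σ1 σ2 ρ x) - Real.log (probQ1 μ1 μ2 σ1 σ2 ρ) :=
      Real.log_div hgpos.ne' hPpos.ne'
    have l1 : Real.log (K'/2 * (x⁻¹)^2) ≤ Real.log (quotDensQ1 μ1 μ2 σ1 σ2 ρ x) :=
      Real.log_le_log (by positivity) hgl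
    have l2 : Real.log (K'/2 * (x⁻¹)^2) = Real.log (K'/2) - 2*Real.log x := by
      rw [Real.log_mul (by positivity) (by positivity), Real.log_pow, Real.log_inv]
      push_cast; ring
    have heq : (Real.log (K'/2) - Real.log (probQ1 μ1 μ2 σ1 σ2 ρ)) * (Real.log x)⁻¹ + (-2)
        = (Real.log (K'/2) - Real.log (probQ1 μ1 μ2 σ1 σ2 ρ) - 2*Real.log x)/Real.log x := by
      field_simp
      ring
    rw [hlogd, heq]
    exact (div_le_div_iff_of_pos_right hlx0).mpr (by linarith)
  · filter_upwards [Filter.eventually_ge_atTop (max 2 (2*(|r|+1))),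
      Filter.eventually_ge_atTop (Real.exp 1)] with x hx hxe
    obtain ⟨hgl, hgu⟩ := hXbound x hx
    have hx0 : (0:ℝ) < x := lt_of_lt_of_le (Real.exp_pos 1) hxe
    have hlx : 1 ≤ Real.log x := (Real.le_log_iff_exp_le hx0).mpr (by simpa using hxe)
    have hlx0 : 0 < Real.log x := by linarith
    have hxinv : (0:ℝ) < x⁻¹ := by positivity
    have hgpos : 0 < quotDensQ1 μ1 μ2 σ1 σ2 ρ x := lt_of_lt_of_le (by positivity) hgl
    have hlogd : Real.log (quotDensQ1 μ1 μ2 σ1 σ2 ρ x / probQ1 μ1 μ2 σ1 σ2 ρ)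
        = Real.log (quotDensQ1 μ1 μ2 σ1 σ2 ρ x) - Real.log (probQ1 μ1 μ2 σ1 σ2 ρ) :=
      Real.log_div hgpos.ne' hPpos.ne'
    have l1 : Real.log (quotDensQ1 μ1 μ2 σ1 σ2 ρ x) ≤ Real.log (4*K*(C₀+1) * (x⁻¹)^2) :=
      Real.log_le_log hgpos hgu
    have l2 : Real.log (4*K*(C₀+1) * (x⁻¹)^2) = Real.log (4*K*(C₀+1)) - 2*Real.log x := by
      rw [Real.log_mul (by positivity) (by positivity), Real.log_pow, Real.log_inv]
      push_cast; ring
    have heq : (Real.log (4*K*(C₀+1)) - Real.log (probQ1 μ1 μ2 σ1 σ2 ρ)) * (Real.log x)⁻¹ + (-2)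
        = (Real.log (4*K*(C₀+1)) - Real.log (probQ1 μ1 μ2 σ1 σ2 ρ) - 2*Real.log x)/Real.log x := by
      field_simp
      ring
    rw [hlogd, heq]
    exact (div_le_div_iff_of_pos_right hlx0).mpr (by linarith)
end

section
/- Assume μ1, μ2, σ1, σ2 > 0 and ρ ∈ (−1,1). Let g(x) := ∫₀^∞ s·f(x·s, s) ds, P(Q1) := ∫₀^∞∫₀^∞ f(s1,s2) ds1 ds2, ω₀ := (ρμ2/σ2 − μ1/σ1)/√(2(1−ρ²)), and f₀ := ((σ1/σ2)·√(1−ρ²)/(2π·P(Q1)))·exp(−μ2²/(2σ2²))·(exp(−ω₀²) − √π·ω₀·erfc(ω₀)). Then the conditional density F(x) := g(x)/P(Q1) of X1/X2 on the first quadrant has a fat tail with exponent 2: lim_{x → ∞} x²·F(x) = f₀. -/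
open Real MeasureTheory Set

section Aux

lemma integrable_gauss : Integrable (fun u : ℝ => Real.exp (-u ^ 2)) := by
  simpa using integrable_exp_neg_mul_sq (one_pos)

lemma integral_shift_Ioi (f : ℝ → ℝ) (a m : ℝ) :
    ∫ x in Ioi a, f (x + m) = ∫ x in Ioi (a + m), f x := by
  rw [← integral_indicator measurableSet_Ioi, ← integral_indicator measurableSet_Ioi,
    ← integral_add_right_eq_self (fun x => (Ioi (a + m)).indicator f x) m]
  congr 1
  ext x
  simp only [indicator_apply, mem_Ioi, add_lt_add_iff_right]

lemma tail_mul {b : ℝ} (hb : 0 < b) (m : ℝ) :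
    ∫ t in Ioi m, t * Real.exp (-b * t ^ 2) = Real.exp (-b * m ^ 2) / (2 * b) := by
  have hderiv : ∀ t ∈ Ici m, HasDerivAt (fun t => -Real.exp (-b * t ^ 2) / (2 * b))
      (t * Real.exp (-b * t ^ 2)) t := by
    intro t _
    have h1 : HasDerivAt (fun t : ℝ => -b * t ^ 2) (-b * (2 * t)) t := by
      simpa using ((hasDerivAt_pow 2 t).const_mul (-b))
    have h2 := (h1.exp).neg.div_const (2 * b)
    refine h2.congr_deriv ?_
    rw [div_eq_iff (by positivity)]
    ring
  have hint : IntegrableOn (fun t => t * Real.exp (-b * t ^ 2)) (Ioi m) :=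
    (integrable_mul_exp_neg_mul_sq hb).integrableOn
  have htend : Filter.Tendsto (fun t => -Real.exp (-b * t ^ 2) / (2 * b)) Filter.atTop
      (nhds 0) := by
    have h0 : Filter.Tendsto (fun t : ℝ => -b * t ^ 2) Filter.atTop Filter.atBot :=
      (Filter.tendsto_pow_atTop (two_ne_zero)).const_mul_atTop_of_neg (by linarith)
    have := (Real.tendsto_exp_atBot.comp h0).neg.div_const (2 * b)
    simpa using this
  have := integral_Ioi_of_hasDerivAt_of_tendsto' hderiv hint htend
  rw [this]
  ring

lemma tail_exp {b : ℝ} (hb : 0 < b) (m : ℝ) :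
    ∫ t in Ioi m, Real.exp (-b * t ^ 2)
      = Real.sqrt π / (2 * Real.sqrt b) * erfc (Real.sqrt b * m) := by
  have hsb : 0 < Real.sqrt b := Real.sqrt_pos.mpr hb
  have h1 : ∀ t : ℝ, Real.exp (-b * t ^ 2) = Real.exp (-(Real.sqrt b * t) ^ 2) := by
    intro t
    rw [mul_pow, Real.sq_sqrt hb.le]
    ring_nf
  simp_rw [h1]
  rw [integral_comp_mul_left_Ioi (fun u => Real.exp (-u ^ 2)) m hsb]
  rw [erfc]
  have hπ : 0 < Real.sqrt π := Real.sqrt_pos.mpr Real.pi_pos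
  rw [smul_eq_mul]
  field_simp

lemma gauss_lin {A : ℝ} (B C : ℝ) (hA : 0 < A) :
    ∫ s in Ioi (0:ℝ), s * Real.exp (-(1/2) * (A * s ^ 2 + 2 * B * s + C))
      = Real.exp (-C / 2) / A * hfun (B / Real.sqrt (2 * A)) := by
  set m : ℝ := B / A with hm
  set ω : ℝ := B / Real.sqrt (2 * A) with hω
  have h2A : (0:ℝ) < 2 * A := by linarith
  have hs2A : 0 < Real.sqrt (2 * A) := Real.sqrt_pos.mpr h2A
  have hsq2A : Real.sqrt (2 * A) ^ 2 = 2 * A := Real.sq_sqrt h2A.le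
  have hω2 : ω ^ 2 = B ^ 2 / (2 * A) := by
    rw [hω, div_pow, hsq2A]
  have key : ∀ s : ℝ, s * Real.exp (-(1/2) * (A * s ^ 2 + 2 * B * s + C))
      = Real.exp (ω ^ 2 - C / 2) *
        ((fun t => (t - m) * Real.exp (-(A/2) * t ^ 2)) (s + m)) := by
    intro s
    have harg : -(1/2) * (A * s ^ 2 + 2 * B * s + C)
        = (ω ^ 2 - C / 2) + (-(A/2) * (s + m) ^ 2) := by
      rw [hω2, hm]; field_simp; ring
    simp only
    rw [show s + m - m = s by ring, harg, Real.exp_add]; ring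
  simp_rw [key]
  rw [integral_const_mul, integral_shift_Ioi (fun t => (t - m) * Real.exp (-(A/2) * t ^ 2)) 0 m,
    zero_add]
  have hA2 : (0:ℝ) < A / 2 := by linarith
  have hint1 : IntegrableOn (fun t => t * Real.exp (-(A/2) * t ^ 2)) (Ioi m) :=
    (integrable_mul_exp_neg_mul_sq hA2).integrableOn
  have hint2 : IntegrableOn (fun t => m * Real.exp (-(A/2) * t ^ 2)) (Ioi m) :=
    ((integrable_exp_neg_mul_sq hA2).const_mul m).integrableOn
  have hsplit : ∫ t in Ioi m, (t - m) * Real.exp (-(A/2) * t ^ 2)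
      = (∫ t in Ioi m, t * Real.exp (-(A/2) * t ^ 2))
        - ∫ t in Ioi m, m * Real.exp (-(A/2) * t ^ 2) := by
    rw [← integral_sub hint1 hint2]
    congr 1; ext t; ring
  rw [hsplit, tail_mul hA2 m, integral_const_mul, tail_exp hA2 m]
  have hsA2 : Real.sqrt (A / 2) * Real.sqrt (2 * A) = A := by
    rw [← Real.sqrt_mul (by linarith), show A / 2 * (2 * A) = A ^ 2 by ring,
      Real.sqrt_sq hA.le]
  have hsA2pos : 0 < Real.sqrt (A / 2) := Real.sqrt_pos.mpr hA2
  have h2s : 2 * Real.sqrt (A / 2) = Real.sqrt (2 * A) := by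
    nlinarith [hsA2, hsq2A, hs2A, Real.sqrt_nonneg (A / 2)]
  have hωarg : Real.sqrt (A / 2) * m = ω := by
    rw [hω, eq_div_iff hs2A.ne', hm,
      show Real.sqrt (A/2) * (B/A) * Real.sqrt (2*A)
        = (Real.sqrt (A/2) * Real.sqrt (2*A)) * (B/A) by ring, hsA2]
    field_simp
  rw [hωarg]
  have e1 : Real.exp (ω ^ 2 - C / 2) = Real.exp (-C / 2) * Real.exp (ω ^ 2) := by
    rw [← Real.exp_add]; ring_nf
  have e2 : -(A/2) * m ^ 2 = -ω ^ 2 := by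
    rw [hω2, hm]; field_simp
  have hmo : m * (Real.sqrt π / (2 * Real.sqrt (A / 2)) * erfc ω)
      = Real.sqrt π * ω / A * erfc ω := by
    rw [hm, hω, ← h2s]
    field_simp
  rw [e1, e2, Real.exp_neg, hmo, hfun]
  have hne := Real.exp_ne_zero (ω ^ 2)
  field_simp

lemma coefA_pos {σ1 σ2 ρ : ℝ} (hσ1 : 0 < σ1) (hσ2 : 0 < σ2) (hk : 0 < 1 - ρ ^ 2)
    (x : ℝ) : 0 < coefA σ1 σ2 ρ x := by
  have h1 : 0 < 1 / σ2 ^ 2 := by positivity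
  have h2 : 0 ≤ (x - ρ * σ1 / σ2) ^ 2 / (σ1 ^ 2 * (1 - ρ ^ 2)) := by positivity
  unfold coefA; linarith

lemma quotDens_eq {μ1 μ2 σ1 σ2 ρ : ℝ} (hσ1 : 0 < σ1) (hσ2 : 0 < σ2)
    (hk : 0 < 1 - ρ ^ 2) (x : ℝ) :
    quotDensQ1 μ1 μ2 σ1 σ2 ρ x
      = (2 * π * σ1 * σ2 * Real.sqrt (1 - ρ ^ 2))⁻¹ *
        (Real.exp (-(coefC μ1 μ2 σ1 σ2 ρ) / 2) / coefA σ1 σ2 ρ x *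
          hfun (omegaFun μ1 μ2 σ1 σ2 ρ x)) := by
  have harg : ∀ s : ℝ, ((s - μ2) / σ2) ^ 2 +
      (x * s - μ1 - ρ * (σ1 / σ2) * (s - μ2)) ^ 2 / (σ1 ^ 2 * (1 - ρ ^ 2))
      = coefA σ1 σ2 ρ x * s ^ 2 + 2 * coefB μ1 μ2 σ1 σ2 ρ x * s + coefC μ1 μ2 σ1 σ2 ρ := by
    intro s
    have h1 : σ1 ≠ 0 := ne_of_gt hσ1
    have h2 : σ2 ≠ 0 := ne_of_gt hσ2
    have h3 : (1 - ρ ^ 2) ≠ 0 := ne_of_gt hk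
    unfold coefA coefB coefC
    field_simp
    ring
  unfold quotDensQ1 bvnDensity
  simp_rw [harg]
  rw [show (∫ s in Ioi (0:ℝ), s * ((2 * π * σ1 * σ2 * Real.sqrt (1 - ρ ^ 2))⁻¹ *
      Real.exp (-(1/2) * (coefA σ1 σ2 ρ x * s ^ 2 + 2 * coefB μ1 μ2 σ1 σ2 ρ x * s +
        coefC μ1 μ2 σ1 σ2 ρ))))
      = (2 * π * σ1 * σ2 * Real.sqrt (1 - ρ ^ 2))⁻¹ *
        ∫ s in Ioi (0:ℝ), s * Real.exp (-(1/2) * (coefA σ1 σ2 ρ x * s ^ 2 +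
          2 * coefB μ1 μ2 σ1 σ2 ρ x * s + coefC μ1 μ2 σ1 σ2 ρ)) by
    rw [← integral_const_mul]; congr 1; ext s; ring]
  rw [gauss_lin _ _ (coefA_pos hσ1 hσ2 hk x)]
  rfl

lemma continuous_erfc : Continuous erfc := by
  have hint := integrable_gauss
  have key : ∀ z : ℝ, erfc z = (2 / Real.sqrt π) *
      ((∫ u, Real.exp (-u ^ 2)) - ((∫ u in Iic (0:ℝ), Real.exp (-u ^ 2))
        + ∫ u in (0:ℝ)..z, Real.exp (-u ^ 2))) := by
    intro z
    rw [erfc]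
    congr 1
    rw [← intervalIntegral.integral_Iic_add_Ioi (hint.integrableOn) (hint.integrableOn),
      ← intervalIntegral.integral_Iic_sub_Iic hint.integrableOn hint.integrableOn]
    ring
  rw [show erfc = _ from funext key]
  apply Continuous.mul continuous_const
  apply Continuous.sub continuous_const
  apply Continuous.add continuous_const
  exact intervalIntegral.continuous_primitive (fun a b => hint.intervalIntegrable) 0

lemma continuous_hfun : Continuous hfun := by
  unfold hfun
  exact continuous_const.sub ((((continuous_const.mul continuous_id).mul
    ((continuous_pow 2).rexp)).mul continuous_erfc))

end Aux

section Limits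
variable {μ1 μ2 σ1 σ2 ρ : ℝ} (hσ1 : 0 < σ1) (hσ2 : 0 < σ2) (hk : 0 < 1 - ρ ^ 2)

include hσ1 hσ2 hk in
lemma tendsto_coefA_div_sq :
    Filter.Tendsto (fun x => coefA σ1 σ2 ρ x / x ^ 2) Filter.atTop
      (nhds (1 / (σ1 ^ 2 * (1 - ρ ^ 2)))) := by
  have hF : Continuous (fun y : ℝ => 1 / σ2 ^ 2 * y ^ 2 +
      (1 - ρ * σ1 / σ2 * y) ^ 2 / (σ1 ^ 2 * (1 - ρ ^ 2))) := by continuity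
  have h0 : Filter.Tendsto (fun x : ℝ => x⁻¹) Filter.atTop (nhds 0) :=
    tendsto_inv_atTop_zero
  have := (hF.tendsto 0).comp h0
  simp only [Function.comp_def] at this
  apply Filter.Tendsto.congr' ?_ (by simpa using this)
  filter_upwards [Filter.eventually_gt_atTop (0:ℝ)] with x hx
  have hx0 : x ≠ 0 := ne_of_gt hx
  have h1 : σ1 ≠ 0 := ne_of_gt hσ1
  have h2 : σ2 ≠ 0 := ne_of_gt hσ2
  have h3 : (1 - ρ ^ 2) ≠ 0 := ne_of_gt hk
  unfold coefA
  field_simp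

include hσ1 hσ2 hk in
lemma tendsto_coefB_div :
    Filter.Tendsto (fun x => coefB μ1 μ2 σ1 σ2 ρ x / x) Filter.atTop
      (nhds ((μ2 * ρ * σ1 / σ2 - μ1) / (σ1 ^ 2 * (1 - ρ ^ 2)))) := by
  have hF : Continuous (fun y : ℝ => -μ2 / σ2 ^ 2 * y +
      (1 - ρ * σ1 / σ2 * y) * (μ2 * ρ * σ1 / σ2 - μ1) / (σ1 ^ 2 * (1 - ρ ^ 2))) := by continuity
  have h0 : Filter.Tendsto (fun x : ℝ => x⁻¹) Filter.atTop (nhds 0) :=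
    tendsto_inv_atTop_zero
  have := (hF.tendsto 0).comp h0
  simp only [Function.comp_def] at this
  apply Filter.Tendsto.congr' ?_ (by simpa using this)
  filter_upwards [Filter.eventually_gt_atTop (0:ℝ)] with x hx
  have hx0 : x ≠ 0 := ne_of_gt hx
  have h1 : σ1 ≠ 0 := ne_of_gt hσ1
  have h2 : σ2 ≠ 0 := ne_of_gt hσ2
  have h3 : (1 - ρ ^ 2) ≠ 0 := ne_of_gt hk
  unfold coefB
  field_simp

include hσ1 hσ2 hk in
lemma tendsto_x2_div_coefA :
    Filter.Tendsto (fun x => x ^ 2 / coefA σ1 σ2 ρ x) Filter.atTop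
      (nhds (σ1 ^ 2 * (1 - ρ ^ 2))) := by
  have hpos : (0:ℝ) < 1 / (σ1 ^ 2 * (1 - ρ ^ 2)) := by positivity
  have := (tendsto_coefA_div_sq hσ1 hσ2 hk).inv₀ (ne_of_gt hpos)
  rw [show (1 / (σ1 ^ 2 * (1 - ρ ^ 2)))⁻¹ = σ1 ^ 2 * (1 - ρ ^ 2) by field_simp] at this
  apply this.congr
  intro x
  rw [div_eq_mul_inv, div_eq_mul_inv, mul_inv, inv_inv, mul_comm]

include hσ1 hσ2 hk in
lemma tendsto_omega :
    Filter.Tendsto (omegaFun μ1 μ2 σ1 σ2 ρ) Filter.atTop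
      (nhds ((μ2 * ρ * σ1 / σ2 - μ1) / (σ1 ^ 2 * (1 - ρ ^ 2)) /
        Real.sqrt (2 * (1 / (σ1 ^ 2 * (1 - ρ ^ 2)))))) := by
  have hpos : (0:ℝ) < 2 * (1 / (σ1 ^ 2 * (1 - ρ ^ 2))) := by positivity
  have hden : Filter.Tendsto (fun x => Real.sqrt (2 * (coefA σ1 σ2 ρ x / x ^ 2)))
      Filter.atTop (nhds (Real.sqrt (2 * (1 / (σ1 ^ 2 * (1 - ρ ^ 2)))))) :=
    (Real.continuous_sqrt.tendsto _).comp
      ((tendsto_coefA_div_sq hσ1 hσ2 hk).const_mul 2)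
  have hne : Real.sqrt (2 * (1 / (σ1 ^ 2 * (1 - ρ ^ 2)))) ≠ 0 :=
    ne_of_gt (Real.sqrt_pos.mpr hpos)
  have := Filter.Tendsto.div (tendsto_coefB_div (μ1 := μ1) (μ2 := μ2) hσ1 hσ2 hk) hden hne
  apply Filter.Tendsto.congr' ?_ this
  filter_upwards [Filter.eventually_gt_atTop (0:ℝ)] with x hx
  have hx0 : x ≠ 0 := ne_of_gt hx
  simp only [Pi.div_apply]
  have hApos : 0 < coefA σ1 σ2 ρ x := coefA_pos hσ1 hσ2 hk x
  have hA : (0:ℝ) ≤ 2 * coefA σ1 σ2 ρ x := by linarith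
  have hs : Real.sqrt (2 * (coefA σ1 σ2 ρ x / x ^ 2))
      = Real.sqrt (2 * coefA σ1 σ2 ρ x) / x := by
    rw [show 2 * (coefA σ1 σ2 ρ x / x ^ 2) = 2 * coefA σ1 σ2 ρ x / x ^ 2 by ring,
      Real.sqrt_div hA, Real.sqrt_sq hx.le]
  have hsne : Real.sqrt (2 * coefA σ1 σ2 ρ x) ≠ 0 :=
    ne_of_gt (Real.sqrt_pos.mpr (by linarith))
  rw [hs, omegaFun]
  field_simp

end Limits

theorem conditional_density_fat_tail
    (μ1 μ2 σ1 σ2 ρ : ℝ) (hμ1 : 0 < μ1) (hμ2 : 0 < μ2) (hσ1 : 0 < σ1) (hσ2 : 0 < σ2)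
    (hρ : ρ ∈ Set.Ioo (-1 : ℝ) 1) :
    Filter.Tendsto
      (fun x : ℝ => x ^ 2 * (quotDensQ1 μ1 μ2 σ1 σ2 ρ x / probQ1 μ1 μ2 σ1 σ2 ρ))
      Filter.atTop
      (nhds ((σ1 / σ2 * Real.sqrt (1 - ρ ^ 2) / (2 * π * probQ1 μ1 μ2 σ1 σ2 ρ)) *
        Real.exp (-μ2 ^ 2 / (2 * σ2 ^ 2)) *
        (Real.exp (-((ρ * μ2 / σ2 - μ1 / σ1) / Real.sqrt (2 * (1 - ρ ^ 2))) ^ 2) -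
          Real.sqrt π * ((ρ * μ2 / σ2 - μ1 / σ1) / Real.sqrt (2 * (1 - ρ ^ 2))) *
            erfc ((ρ * μ2 / σ2 - μ1 / σ1) / Real.sqrt (2 * (1 - ρ ^ 2)))))) := by
  obtain ⟨hρ1, hρ2⟩ := hρ
  have hk : 0 < 1 - ρ ^ 2 := by nlinarith
  have h1 : σ1 ≠ 0 := ne_of_gt hσ1
  have h2 : σ2 ≠ 0 := ne_of_gt hσ2
  have h3 : (1 - ρ ^ 2) ≠ 0 := ne_of_gt hk
  have hπ : (0:ℝ) < π := Real.pi_pos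
  set P := probQ1 μ1 μ2 σ1 σ2 ρ with hP
  set N : ℝ := (2 * π * σ1 * σ2 * Real.sqrt (1 - ρ ^ 2))⁻¹ with hN
  set E : ℝ := Real.exp (-(coefC μ1 μ2 σ1 σ2 ρ) / 2) with hE
  set ω₀ : ℝ := (ρ * μ2 / σ2 - μ1 / σ1) / Real.sqrt (2 * (1 - ρ ^ 2)) with hω₀
  -- the limit point of omegaFun equals ω₀
  have hsk : 0 < Real.sqrt (1 - ρ ^ 2) := Real.sqrt_pos.mpr hk
  have hs2k : 0 < Real.sqrt (2 * (1 - ρ ^ 2)) := Real.sqrt_pos.mpr (by linarith)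
  have hωeq : (μ2 * ρ * σ1 / σ2 - μ1) / (σ1 ^ 2 * (1 - ρ ^ 2)) /
      Real.sqrt (2 * (1 / (σ1 ^ 2 * (1 - ρ ^ 2)))) = ω₀ := by
    have hq : 2 * (1 / (σ1 ^ 2 * (1 - ρ ^ 2)))
        = (2 * (1 - ρ ^ 2)) / ((σ1 * (1 - ρ ^ 2)) ^ 2) := by
      field_simp
    rw [hq, Real.sqrt_div (by linarith), Real.sqrt_sq (by positivity), hω₀]
    rw [div_div_eq_mul_div]
    congr 1
    field_simp
  -- pointwise identity
  have hfun_eq : ∀ x : ℝ, x ^ 2 * (quotDensQ1 μ1 μ2 σ1 σ2 ρ x / P)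
      = (x ^ 2 / coefA σ1 σ2 ρ x) * hfun (omegaFun μ1 μ2 σ1 σ2 ρ x) * (N * E / P) := by
    intro x
    rw [quotDens_eq hσ1 hσ2 hk x, ← hN, ← hE]
    ring
  have hT : Filter.Tendsto
      (fun x : ℝ => x ^ 2 * (quotDensQ1 μ1 μ2 σ1 σ2 ρ x / P)) Filter.atTop
      (nhds ((σ1 ^ 2 * (1 - ρ ^ 2)) * hfun ω₀ * (N * E / P))) := by
    have hh : Filter.Tendsto (fun x => hfun (omegaFun μ1 μ2 σ1 σ2 ρ x)) Filter.atTop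
        (nhds (hfun ω₀)) := by
      have hω := tendsto_omega (μ1 := μ1) (μ2 := μ2) hσ1 hσ2 hk
      rw [hωeq] at hω
      exact (continuous_hfun.tendsto ω₀).comp hω
    have := ((tendsto_x2_div_coefA hσ1 hσ2 hk).mul hh).mul_const (N * E / P)
    exact this.congr (fun x => (hfun_eq x).symm)
  -- identify the limit value
  have hval : (σ1 ^ 2 * (1 - ρ ^ 2)) * hfun ω₀ * (N * E / P)
      = (σ1 / σ2 * Real.sqrt (1 - ρ ^ 2) / (2 * π * P)) *
        Real.exp (-μ2 ^ 2 / (2 * σ2 ^ 2)) *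
        (Real.exp (-ω₀ ^ 2) - Real.sqrt π * ω₀ * erfc ω₀) := by
    have hC : E = Real.exp (-μ2 ^ 2 / (2 * σ2 ^ 2)) * Real.exp (-ω₀ ^ 2) := by
      rw [hE, ← Real.exp_add]
      congr 1
      rw [hω₀, div_pow, Real.sq_sqrt (by linarith : (0:ℝ) ≤ 2 * (1 - ρ ^ 2))]
      unfold coefC
      field_simp
      ring
    rw [hC, hN, hfun, Real.exp_neg]
    have hXne := Real.exp_ne_zero (ω₀ ^ 2)
    clear_value ω₀
    set s := Real.sqrt (1 - ρ ^ 2) with hsdef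
    have hss : s ^ 2 = 1 - ρ ^ 2 := Real.sq_sqrt hk.le
    have hsne : s ≠ 0 := ne_of_gt hsk
    clear_value s
    have hcoef : σ1 ^ 2 * (1 - ρ ^ 2) * (2 * π * σ1 * σ2 * s)⁻¹
        = σ1 / σ2 * s / (2 * π) := by
      rw [← hss]; field_simp
    have expand : σ1 ^ 2 * (1 - ρ ^ 2) *
          (1 - Real.sqrt π * ω₀ * Real.exp (ω₀ ^ 2) * erfc ω₀) *
          ((2 * π * σ1 * σ2 * s)⁻¹ *
            (Real.exp (-μ2 ^ 2 / (2 * σ2 ^ 2)) * (Real.exp (ω₀ ^ 2))⁻¹) / P)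
        = (σ1 ^ 2 * (1 - ρ ^ 2) * (2 * π * σ1 * σ2 * s)⁻¹) *
          ((1 - Real.sqrt π * ω₀ * Real.exp (ω₀ ^ 2) * erfc ω₀) *
            (Real.exp (-μ2 ^ 2 / (2 * σ2 ^ 2)) * (Real.exp (ω₀ ^ 2))⁻¹) / P) := by
      ring
    rw [expand, hcoef]
    field_simp
  rw [hval] at hT
  exact hT
end

section
/- Let g : ℝ → ℝ be twice differentiable with |g(s)| ≤ 1 and |g''(s)| ≤ M for all s ∈ ℝ. Then for all a ≥ 1/4 and b ≥ 1: | ∫₀^∞ exp(−a(s−b)²)·g(s) ds − √(π/a)·g(b) | ≤ (√π/4)·M·a^{−3/2} + a^{−1/2}·b^{−1}·exp(−a·b). -/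
open Real MeasureTheory Set Filter


lemma integrable_sq_mul_gauss {a : ℝ} (ha : 0 < a) :
    Integrable (fun x : ℝ => x ^ 2 * exp (-a * x ^ 2)) := by
  have := integrable_rpow_mul_exp_neg_mul_sq ha (s := 2) (by norm_num)
  have e : ∀ x : ℝ, x ^ (2 : ℝ) * exp (-a * x ^ 2) = x ^ 2 * exp (-a * x ^ 2) := by
    intro x
    rw [show (2:ℝ) = ((2:ℕ):ℝ) by norm_num, Real.rpow_natCast]
  simpa [e] using this

lemma gauss_moment2 {a : ℝ} (ha : 0 < a) :
    ∫ x : ℝ, exp (-a * x ^ 2) * x ^ 2 = Real.sqrt (π / a) / (2 * a) := by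
  have ha' : a ≠ 0 := ha.ne'
  -- half-line version
  have hderiv : ∀ x : ℝ, HasDerivAt (fun y : ℝ => -(y * exp (-a * y ^ 2)) / (2 * a))
      (x ^ 2 * exp (-a * x ^ 2) - exp (-a * x ^ 2) / (2 * a)) x := by
    intro x
    have h1 : HasDerivAt (fun y : ℝ => -a * y ^ 2) (-a * (2 * x)) x := by
      simpa using ((hasDerivAt_pow 2 x).const_mul (-a))
    have h2 : HasDerivAt (fun y : ℝ => exp (-a * y ^ 2)) (exp (-a * x ^ 2) * (-a * (2 * x))) x :=
      h1.exp
    have h3 : HasDerivAt (fun y : ℝ => y * exp (-a * y ^ 2))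
        (1 * exp (-a * x ^ 2) + x * (exp (-a * x ^ 2) * (-a * (2 * x)))) x :=
      (hasDerivAt_id x).mul h2
    have h4 := (h3.neg).div_const (2 * a)
    refine h4.congr_deriv ?_
    field_simp
    ring
  have hint2 : IntegrableOn (fun x : ℝ => x ^ 2 * exp (-a * x ^ 2)) (Ioi 0) :=
    (integrable_sq_mul_gauss ha).integrableOn
  have hint0 : IntegrableOn (fun x : ℝ => exp (-a * x ^ 2) / (2 * a)) (Ioi 0) :=
    ((integrable_exp_neg_mul_sq ha).div_const _).integrableOn
  have hintd : IntegrableOn (fun x : ℝ => x ^ 2 * exp (-a * x ^ 2) - exp (-a * x ^ 2) / (2 * a))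
      (Ioi 0) := hint2.sub hint0
  have htend : Tendsto (fun y : ℝ => -(y * exp (-a * y ^ 2)) / (2 * a)) atTop (nhds 0) := by
    have h0 : Tendsto (fun y : ℝ => y * exp (-a * y ^ 2)) atTop (nhds 0) := by
      have hlo := rpow_mul_exp_neg_mul_sq_isLittleO_exp_neg ha 1
      have h1 : Tendsto (fun x : ℝ => exp (-(1 / 2) * x)) atTop (nhds 0) := by
        have h0 : Tendsto (fun x : ℝ => -(1 / 2) * x) atTop atBot :=
          tendsto_id.const_mul_atTop_of_neg (by norm_num : (-(1/2) : ℝ) < 0)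
        exact tendsto_exp_atBot.comp h0
      have h2 := hlo.tendsto_zero_of_tendsto h1
      apply h2.congr'
      filter_upwards [eventually_ge_atTop (0:ℝ)] with x hx
      rw [Real.rpow_one]
    have := h0.neg.div_const (2 * a)
    simpa using this
  have key := integral_Ioi_of_hasDerivAt_of_tendsto' (a := 0)
    (fun x _ => hderiv x) hintd htend
  simp only [mul_zero, zero_mul, neg_zero, zero_div, sub_zero, zero_pow, ne_eq,
    OfNat.ofNat_ne_zero, not_false_eq_true] at key
  -- key : ∫ x in Ioi 0, (x^2 * exp - exp/(2a)) = 0 - 0 = 0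
  have hsplit : ∫ x in Ioi (0:ℝ), (x ^ 2 * exp (-a * x ^ 2) - exp (-a * x ^ 2) / (2 * a))
      = (∫ x in Ioi (0:ℝ), x ^ 2 * exp (-a * x ^ 2)) - ∫ x in Ioi (0:ℝ), exp (-a * x ^ 2) / (2 * a) :=
    integral_sub hint2 hint0
  have hIoi : ∫ x in Ioi (0:ℝ), x ^ 2 * exp (-a * x ^ 2) = Real.sqrt (π / a) / (4 * a) := by
    have h5 : ∫ x in Ioi (0:ℝ), exp (-a * x ^ 2) / (2 * a)
        = (Real.sqrt (π / a) / 2) / (2 * a) := by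
      rw [integral_div, integral_gaussian_Ioi]
    have h6 : (0:ℝ) = (∫ x in Ioi (0:ℝ), x ^ 2 * exp (-a * x ^ 2)) - (Real.sqrt (π / a) / 2) / (2 * a) := by
      rw [← h5, ← hsplit, key]
    have hI : ∫ x in Ioi (0:ℝ), x ^ 2 * exp (-a * x ^ 2) = (Real.sqrt (π / a) / 2) / (2 * a) := by
      linarith
    rw [hI]
    ring
  -- whole line by evenness
  have heven : ∫ x : ℝ, exp (-a * x ^ 2) * x ^ 2
      = 2 * ∫ x in Ioi (0:ℝ), exp (-a * x ^ 2) * x ^ 2 := by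
    have := integral_comp_abs (f := fun x : ℝ => exp (-a * x ^ 2) * x ^ 2)
    simpa [sq_abs] using this
  rw [heven]
  have : ∫ x in Ioi (0:ℝ), exp (-a * x ^ 2) * x ^ 2
      = ∫ x in Ioi (0:ℝ), x ^ 2 * exp (-a * x ^ 2) := by
    congr 1; ext x; ring
  rw [this, hIoi]
  field_simp
  ring

lemma gauss_tail {a b : ℝ} (ha : 0 < a) (hb : 0 < b) :
    ∫ u in Ioi (0:ℝ), (u + b) * exp (-a * (u + b) ^ 2) = exp (-a * b ^ 2) / (2 * a) := by
  have hderiv : ∀ x : ℝ, HasDerivAt (fun y : ℝ => -exp (-a * (y + b) ^ 2) / (2 * a))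
      ((x + b) * exp (-a * (x + b) ^ 2)) x := by
    intro x
    have h1 : HasDerivAt (fun y : ℝ => -a * (y + b) ^ 2) (-a * (2 * (x + b))) x := by
      have h0 : HasDerivAt (fun y : ℝ => y + b) 1 x := (hasDerivAt_id x).add_const b
      simpa using ((h0.pow 2).const_mul (-a))
    have h2 := (h1.exp.neg).div_const (2 * a)
    refine h2.congr_deriv ?_
    field_simp
  have hint : IntegrableOn (fun u : ℝ => (u + b) * exp (-a * (u + b) ^ 2)) (Ioi 0) := by
    have := (integrable_mul_exp_neg_mul_sq ha).comp_add_right b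
    exact this.integrableOn
  have htend : Tendsto (fun y : ℝ => -exp (-a * (y + b) ^ 2) / (2 * a)) atTop (nhds 0) := by
    have h0 : Tendsto (fun y : ℝ => -a * (y + b) ^ 2) atTop atBot := by
      apply Tendsto.const_mul_atTop_of_neg (neg_lt_zero.2 ha)
      exact (tendsto_pow_atTop two_ne_zero).comp (tendsto_atTop_add_const_right _ b tendsto_id)
    have := (tendsto_exp_atBot.comp h0).neg.div_const (2 * a)
    simpa using this
  have key := integral_Ioi_of_hasDerivAt_of_tendsto' (a := 0)
    (fun x _ => hderiv x) hint htend
  rw [key]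
  simp
  ring

lemma taylor2_bound (g : ℝ → ℝ) (M : ℝ)
    (hg : Differentiable ℝ g) (hg' : Differentiable ℝ (deriv g))
    (hg'' : ∀ s : ℝ, |deriv (deriv g) s| ≤ M) (b s : ℝ) :
    |g s - g b - deriv g b * (s - b)| ≤ M / 2 * (s - b) ^ 2 := by
  have hM : 0 ≤ M := le_trans (abs_nonneg _) (hg'' 0)
  have hgc : Continuous (deriv g) := hg'.continuous
  have hlip : ∀ t : ℝ, |deriv g t - deriv g b| ≤ M * |t - b| := by
    intro t
    have := Convex.norm_image_sub_le_of_norm_deriv_le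
      (f := deriv g) (s := (univ : Set ℝ)) (C := M)
      (fun x _ => hg' x)
      (fun x _ => by simpa [Real.norm_eq_abs] using hg'' x)
      convex_univ (mem_univ b) (mem_univ t)
    simpa [Real.norm_eq_abs] using this
  have key : g s - g b - deriv g b * (s - b) =
      ∫ t in b..s, (deriv g t - deriv g b) := by
    rw [intervalIntegral.integral_sub (hgc.intervalIntegrable _ _)
      intervalIntegrable_const,
      intervalIntegral.integral_deriv_eq_sub (fun x _ => hg x)
        (hgc.intervalIntegrable _ _),
      intervalIntegral.integral_const, smul_eq_mul]
    ring
  rw [key]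
  have h1 : |∫ t in b..s, (deriv g t - deriv g b)| ≤
      |∫ t in b..s, M * abs (t - b)| := by
    rw [← Real.norm_eq_abs (∫ t in b..s, _)]
    apply intervalIntegral.norm_integral_le_abs_of_norm_le
    · exact Filter.Eventually.of_forall fun t => by
        simpa [Real.norm_eq_abs] using hlip t
    · exact (continuous_const.mul (continuous_abs.comp (by fun_prop))).intervalIntegrable _ _
  refine h1.trans ?_
  have h2 : ∫ t in b..s, (t - b) = (s - b) ^ 2 / 2 := by
    rw [intervalIntegral.integral_comp_sub_right (fun t => t) b]
    simp [integral_id]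
  rcases le_total b s with h | h
  · have heq : ∫ t in b..s, M * abs (t - b) = M * ((s - b) ^ 2 / 2) := by
      rw [← h2, ← intervalIntegral.integral_const_mul]
      apply intervalIntegral.integral_congr
      intro t ht
      rw [uIcc_of_le h] at ht
      show M * |t - b| = M * (t - b)
      rw [abs_of_nonneg (by linarith [ht.1])]
    rw [heq, abs_of_nonneg (by positivity)]
    nlinarith [sq_nonneg (s - b)]
  · have heq : ∫ t in b..s, M * abs (t - b) = M * (-((s - b) ^ 2 / 2)) := by
      have e : ∫ t in b..s, M * abs (t - b) = ∫ t in b..s, (-M) * (t - b) := by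
        apply intervalIntegral.integral_congr
        intro t ht
        rw [uIcc_of_ge h] at ht
        show M * |t - b| = -M * (t - b)
        rw [abs_of_nonpos (by linarith [ht.2])]
        ring
      rw [e, intervalIntegral.integral_const_mul, h2]
      ring
    rw [heq, abs_of_nonpos (by nlinarith [sq_nonneg (s-b)])]
    nlinarith [sq_nonneg (s - b)]


theorem laplace_approximation_bound
    (g : ℝ → ℝ) (M : ℝ)
    (hg : Differentiable ℝ g) (hg' : Differentiable ℝ (deriv g))
    (hgb : ∀ s : ℝ, |g s| ≤ 1) (hg'' : ∀ s : ℝ, |deriv (deriv g) s| ≤ M) :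
    ∀ a : ℝ, 1 / 4 ≤ a → ∀ b : ℝ, 1 ≤ b →
      |(∫ s in Set.Ioi (0 : ℝ), Real.exp (-a * (s - b) ^ 2) * g s) -
          Real.sqrt (π / a) * g b| ≤
        Real.sqrt π / 4 * M * a ^ (-(3 : ℝ) / 2) +
          a ^ (-(1 : ℝ) / 2) * b⁻¹ * Real.exp (-(a * b)) := by
  intro a ha b hb
  have ha0 : 0 < a := lt_of_lt_of_le (by norm_num) ha
  have hb0 : 0 < b := lt_of_lt_of_le one_pos hb
  have hM : 0 ≤ M := le_trans (abs_nonneg _) (hg'' 0)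
  set f : ℝ → ℝ := fun s => Real.exp (-a * (s - b) ^ 2) with hfdef
  have hgc : Continuous g := hg.continuous
  have hfc : Continuous f := by
    apply Real.continuous_exp.comp
    fun_prop
  -- integrability
  have int_f : Integrable f := (integrable_exp_neg_mul_sq ha0).comp_sub_right b
  have habs : ∀ s, ‖f s * g s‖ ≤ f s := by
    intro s
    rw [Real.norm_eq_abs, abs_mul, abs_of_nonneg (exp_pos _).le]
    calc f s * |g s| ≤ f s * 1 := by
          exact mul_le_mul_of_nonneg_left (hgb s) (exp_pos _).le
      _ = f s := mul_one _
  have int_fg : Integrable (fun s => f s * g s) := by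
    apply Integrable.mono' int_f (hfc.mul hgc).aestronglyMeasurable
    exact Filter.Eventually.of_forall habs
  have int_f1 : Integrable (fun s => f s * (s - b)) := by
    have h := (integrable_mul_exp_neg_mul_sq ha0).comp_sub_right b
    exact h.congr (Filter.Eventually.of_forall fun s => mul_comm (s - b) (f s))
  have int_f2 : Integrable (fun s => f s * (s - b) ^ 2) := by
    have h := (integrable_sq_mul_gauss ha0).comp_sub_right b
    exact h.congr (Filter.Eventually.of_forall fun s => mul_comm ((s - b) ^ 2) (f s))
  -- whole-line integrals
  have E1 : ∫ s : ℝ, f s = Real.sqrt (π / a) := by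
    rw [show (∫ s : ℝ, f s) = ∫ x : ℝ, Real.exp (-a * x ^ 2) from
      integral_sub_right_eq_self (fun x : ℝ => Real.exp (-a * x ^ 2)) b, integral_gaussian]
  have E2 : ∫ s : ℝ, f s * (s - b) = 0 := by
    have hodd : ∫ x : ℝ, Real.exp (-a * x ^ 2) * x = 0 := by
      have h := integral_neg_eq_self (fun x : ℝ => Real.exp (-a * x ^ 2) * x) volume
      simp only [neg_sq, mul_neg, integral_neg] at h
      linarith
    rw [show (∫ s : ℝ, f s * (s - b)) = ∫ x : ℝ, Real.exp (-a * x ^ 2) * x from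
      integral_sub_right_eq_self (fun x : ℝ => Real.exp (-a * x ^ 2) * x) b, hodd]
  have E3 : ∫ s : ℝ, f s * (s - b) ^ 2 = Real.sqrt (π / a) / (2 * a) := by
    rw [show (∫ s : ℝ, f s * (s - b) ^ 2) = ∫ x : ℝ, Real.exp (-a * x ^ 2) * x ^ 2 from
      integral_sub_right_eq_self (fun x : ℝ => Real.exp (-a * x ^ 2) * x ^ 2) b,
      gauss_moment2 ha0]
  -- main term
  have key : (∫ s : ℝ, f s * g s) - Real.sqrt (π / a) * g b
      = ∫ s : ℝ, f s * (g s - g b - deriv g b * (s - b)) := by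
    have e : (fun s => f s * (g s - g b - deriv g b * (s - b)))
        = fun s => (f s * g s - g b * f s) - deriv g b * (f s * (s - b)) := by
      funext s; ring
    have i2 : Integrable (fun s => g b * f s) := int_f.const_mul (g b)
    have i3 : Integrable (fun s => deriv g b * (f s * (s - b))) := int_f1.const_mul _
    have i1 : Integrable (fun s => f s * g s - g b * f s) := int_fg.sub i2
    rw [e, integral_sub i1 i3, integral_sub int_fg i2,
      integral_const_mul, integral_const_mul, E1, E2]
    ring
  have hmain : |(∫ s : ℝ, f s * g s) - Real.sqrt (π / a) * g b|
      ≤ M / 2 * (Real.sqrt (π / a) / (2 * a)) := by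
    rw [key, ← Real.norm_eq_abs]
    calc ‖∫ s : ℝ, f s * (g s - g b - deriv g b * (s - b))‖
        ≤ ∫ s : ℝ, M / 2 * (f s * (s - b) ^ 2) := by
          apply MeasureTheory.norm_integral_le_of_norm_le (int_f2.const_mul _)
          refine Filter.Eventually.of_forall fun s => ?_
          rw [Real.norm_eq_abs, abs_mul, abs_of_nonneg (exp_pos _).le]
          calc f s * |g s - g b - deriv g b * (s - b)|
              ≤ f s * (M / 2 * (s - b) ^ 2) :=
                mul_le_mul_of_nonneg_left
                  (taylor2_bound g M hg hg' hg'' b s) (exp_pos _).le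
            _ = M / 2 * (f s * (s - b) ^ 2) := by ring
      _ = M / 2 * (Real.sqrt (π / a) / (2 * a)) := by
          rw [integral_const_mul, E3]
  -- tail
  have tail1 : |∫ s in Iic (0:ℝ), f s * g s| ≤ ∫ s in Iic (0:ℝ), f s := by
    rw [← Real.norm_eq_abs]
    exact MeasureTheory.norm_integral_le_of_norm_le int_f.integrableOn
      (Filter.Eventually.of_forall habs)
  have tail2 : ∫ s in Iic (0:ℝ), f s = ∫ u in Ioi (0:ℝ), Real.exp (-a * (u + b) ^ 2) := by
    have h := integral_comp_neg_Iic (0:ℝ) (fun x => Real.exp (-a * (x + b) ^ 2))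
    rw [neg_zero] at h
    rw [← h]
    apply setIntegral_congr_fun measurableSet_Iic
    intro s _
    show Real.exp (-a * (s - b) ^ 2) = Real.exp (-a * (-s + b) ^ 2)
    ring_nf
  have tail3 : ∫ u in Ioi (0:ℝ), Real.exp (-a * (u + b) ^ 2)
      ≤ ∫ u in Ioi (0:ℝ), ((u + b) / b) * Real.exp (-a * (u + b) ^ 2) := by
    apply setIntegral_mono_on
    · exact ((integrable_exp_neg_mul_sq ha0).comp_add_right b).integrableOn
    · have h := (((integrable_mul_exp_neg_mul_sq ha0).comp_add_right b).div_const b).integrableOn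
        (s := Ioi (0:ℝ))
      apply h.congr_fun ?_ measurableSet_Ioi
      intro u _
      show (u + b) * Real.exp (-a * (u + b) ^ 2) / b = (u + b) / b * Real.exp (-a * (u + b) ^ 2)
      ring
    · exact measurableSet_Ioi
    · intro u hu
      have h1 : 1 ≤ (u + b) / b := by
        rw [le_div_iff₀ hb0]
        have := mem_Ioi.1 hu
        linarith
      calc Real.exp (-a * (u + b) ^ 2) = 1 * Real.exp (-a * (u + b) ^ 2) := (one_mul _).symm
        _ ≤ (u + b) / b * Real.exp (-a * (u + b) ^ 2) :=
            mul_le_mul_of_nonneg_right h1 (exp_pos _).le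
  have tail4 : ∫ u in Ioi (0:ℝ), ((u + b) / b) * Real.exp (-a * (u + b) ^ 2)
      = (Real.exp (-a * b ^ 2) / (2 * a)) / b := by
    have e : (fun u : ℝ => ((u + b) / b) * Real.exp (-a * (u + b) ^ 2))
        = fun u => ((u + b) * Real.exp (-a * (u + b) ^ 2)) / b := by
      funext u; ring
    rw [e, integral_div, gauss_tail ha0 hb0]
  have htail : |∫ s in Iic (0:ℝ), f s * g s| ≤ (Real.exp (-a * b ^ 2) / (2 * a)) / b := by
    calc |∫ s in Iic (0:ℝ), f s * g s| ≤ ∫ s in Iic (0:ℝ), f s := tail1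
      _ = ∫ u in Ioi (0:ℝ), Real.exp (-a * (u + b) ^ 2) := tail2
      _ ≤ ∫ u in Ioi (0:ℝ), ((u + b) / b) * Real.exp (-a * (u + b) ^ 2) := tail3
      _ = (Real.exp (-a * b ^ 2) / (2 * a)) / b := tail4
  -- split
  have hsplit : ∫ s in Ioi (0:ℝ), f s * g s
      = (∫ s : ℝ, f s * g s) - ∫ s in Iic (0:ℝ), f s * g s := by
    rw [← intervalIntegral.integral_Iic_add_Ioi (b := (0:ℝ)) int_fg.integrableOn int_fg.integrableOn]
    ring
  -- arithmetic facts
  have hsa0 : 0 < Real.sqrt a := Real.sqrt_pos.2 ha0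
  have hsa : 1 / 2 ≤ Real.sqrt a := by
    have : Real.sqrt (1 / 4) ≤ Real.sqrt a := Real.sqrt_le_sqrt ha
    rwa [show (1/4 : ℝ) = (1/2)^2 by norm_num, Real.sqrt_sq (by norm_num : (0:ℝ) ≤ 1/2)] at this
  have hsq : Real.sqrt a * Real.sqrt a = a := Real.mul_self_sqrt ha0.le
  have h12 : a ^ (-(1:ℝ)/2) = (Real.sqrt a)⁻¹ := by
    rw [show (-(1:ℝ)/2) = -(1/2 : ℝ) by norm_num, Real.rpow_neg ha0.le,
      ← Real.sqrt_eq_rpow]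
  have h32 : a ^ (-(3:ℝ)/2) = (Real.sqrt a * a)⁻¹ := by
    rw [show (-(3:ℝ)/2) = -(1/2 : ℝ) + -1 by norm_num, Real.rpow_add ha0,
      Real.rpow_neg_one, Real.rpow_neg ha0.le, ← Real.sqrt_eq_rpow, mul_inv]
  have hsqrtdiv : Real.sqrt (π / a) = Real.sqrt π / Real.sqrt a := Real.sqrt_div pi_pos.le a
  have hA : M / 2 * (Real.sqrt (π / a) / (2 * a)) = Real.sqrt π / 4 * M * a ^ (-(3:ℝ)/2) := by
    rw [hsqrtdiv, h32]
    field_simp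
    ring
  have hB : (Real.exp (-a * b ^ 2) / (2 * a)) / b
      ≤ a ^ (-(1:ℝ)/2) * b⁻¹ * Real.exp (-(a * b)) := by
    have h2a : Real.sqrt a ≤ 2 * a := by nlinarith
    have hexp : Real.exp (-a * b ^ 2) ≤ Real.exp (-(a * b)) := by
      apply Real.exp_le_exp.2
      nlinarith [mul_le_mul_of_nonneg_left hb (mul_pos ha0 hb0).le]
    have step : (Real.exp (-a * b ^ 2) / (2 * a)) / b
        ≤ (Real.exp (-(a * b)) / Real.sqrt a) / b := by
      gcongr
    calc (Real.exp (-a * b ^ 2) / (2 * a)) / b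
        ≤ (Real.exp (-(a * b)) / Real.sqrt a) / b := step
      _ = a ^ (-(1:ℝ)/2) * b⁻¹ * Real.exp (-(a * b)) := by
          rw [h12]; ring
  -- conclude
  have goal_eq : |(∫ s in Ioi (0:ℝ), f s * g s) - Real.sqrt (π / a) * g b|
      ≤ M / 2 * (Real.sqrt (π / a) / (2 * a)) + (Real.exp (-a * b ^ 2) / (2 * a)) / b := by
    rw [hsplit]
    calc |((∫ s : ℝ, f s * g s) - ∫ s in Iic (0:ℝ), f s * g s) - Real.sqrt (π / a) * g b|
        = |((∫ s : ℝ, f s * g s) - Real.sqrt (π / a) * g b)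
            + -(∫ s in Iic (0:ℝ), f s * g s)| := by rw [sub_right_comm, sub_eq_add_neg]
      _ ≤ |(∫ s : ℝ, f s * g s) - Real.sqrt (π / a) * g b|
            + |-(∫ s in Iic (0:ℝ), f s * g s)| := abs_add_le _ _
      _ ≤ M / 2 * (Real.sqrt (π / a) / (2 * a)) + (Real.exp (-a * b ^ 2) / (2 * a)) / b := by
          rw [abs_neg]
          exact add_le_add hmain htail
  calc |(∫ s in Set.Ioi (0:ℝ), Real.exp (-a * (s - b) ^ 2) * g s) - Real.sqrt (π / a) * g b|
      ≤ M / 2 * (Real.sqrt (π / a) / (2 * a)) + (Real.exp (-a * b ^ 2) / (2 * a)) / b := goal_eq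
    _ ≤ Real.sqrt π / 4 * M * a ^ (-(3:ℝ)/2) + a ^ (-(1:ℝ)/2) * b⁻¹ * Real.exp (-(a * b)) := by
        rw [hA]
        exact add_le_add le_rfl hB
end

section
/- Assume μ1, μ2 ∈ ℝ, σ1, σ2 > 0 and ρ ∈ (−1,1), and let f be the bivariate normal density with these parameters. Let φ(z) := (2π)^{−1/2}·exp(−z²/2), Φ(z) := ∫_{−∞}^z φ(u) du, and δ_ρ := sign(ρ). Then the probability of the open first quadrant satisfies: ∫₀^∞∫₀^∞ f(s1,s2) ds1 ds2 = 1 − ∫_{−∞}^∞ Φ((√|ρ|·z − μ1/σ1)/√(1−|ρ|))·φ(z) dz − ∫_{−∞}^∞ Φ((δ_ρ·√|ρ|·z − μ2/σ2)/√(1−|ρ|))·φ(z) dz + ∫_{−∞}^∞ Φ((√|ρ|·z − μ1/σ1)/√(1−|ρ|))·Φ((δ_ρ·√|ρ|·z − μ2/σ2)/√(1−|ρ|))·φ(z) dz. -/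
open Real MeasureTheory Set

/-- The standard normal density `φ`. -/
noncomputable def stdPhi (z : ℝ) : ℝ := (2 * π) ^ (-(1 / 2) : ℝ) * Real.exp (-z ^ 2 / 2)

/-- The standard normal distribution function `Φ`. -/
noncomputable def stdPhiCdf (z : ℝ) : ℝ := ∫ u in Set.Iic z, stdPhi u

lemma twoPiPos : (0:ℝ) < 2 * π := by positivity

lemma stdPhi_eq (z : ℝ) : stdPhi z = (Real.sqrt (2 * π))⁻¹ * Real.exp (-z ^ 2 / 2) := by
  rw [stdPhi, Real.sqrt_eq_rpow, show (-(1/2) : ℝ) = -(1/2) from rfl,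
    Real.rpow_neg twoPiPos.le]

lemma stdPhi_pos (z : ℝ) : 0 < stdPhi z := by
  rw [stdPhi]; positivity

lemma stdPhi_nonneg (z : ℝ) : 0 ≤ stdPhi z := (stdPhi_pos z).le

lemma continuous_stdPhi : Continuous stdPhi := by
  unfold stdPhi; fun_prop

lemma integrable_stdPhi : Integrable stdPhi := by
  have : Integrable (fun x : ℝ => Real.exp (-(1/2) * x ^ 2)) := integrable_exp_neg_mul_sq (by norm_num)
  have h := this.const_mul ((2 * π) ^ (-(1 / 2) : ℝ))
  refine h.congr (Filter.Eventually.of_forall fun x => ?_)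
  show _ = stdPhi x
  rw [stdPhi]; ring_nf

lemma integral_stdPhi : ∫ z, stdPhi z = 1 := by
  have h : ∫ z : ℝ, Real.exp (-(1/2) * z ^ 2) = Real.sqrt (2 * π) := by
    rw [integral_gaussian]
    rw [show (π / (1/2)) = 2 * π by ring]
  calc ∫ z, stdPhi z = (Real.sqrt (2*π))⁻¹ * ∫ z : ℝ, Real.exp (-(1/2) * z ^ 2) := by
        rw [← integral_const_mul]
        congr 1 with z
        rw [stdPhi_eq]; ring_nf
    _ = 1 := by
        rw [h, inv_mul_cancel₀ (Real.sqrt_ne_zero'.2 twoPiPos)]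

lemma stdPhi_neg (z : ℝ) : stdPhi (-z) = stdPhi z := by rw [stdPhi, stdPhi, neg_pow]; ring_nf

lemma stdPhiCdf_nonneg (z : ℝ) : 0 ≤ stdPhiCdf z :=
  setIntegral_nonneg measurableSet_Iic fun x _ => stdPhi_nonneg x

lemma stdPhiCdf_mono : Monotone stdPhiCdf := fun x y hxy =>
  setIntegral_mono_set integrable_stdPhi.integrableOn
    (Filter.Eventually.of_forall fun z => stdPhi_nonneg z)
    (HasSubset.Subset.eventuallyLE (Iic_subset_Iic.2 hxy))

lemma measurable_stdPhiCdf : Measurable stdPhiCdf := stdPhiCdf_mono.measurable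

lemma stdPhiCdf_add_Ioi (b : ℝ) : stdPhiCdf b + ∫ z in Ioi b, stdPhi z = 1 := by
  rw [stdPhiCdf, intervalIntegral.integral_Iic_add_Ioi integrable_stdPhi.integrableOn
    integrable_stdPhi.integrableOn, integral_stdPhi]

lemma stdPhiCdf_le_one (z : ℝ) : stdPhiCdf z ≤ 1 := by
  have := stdPhiCdf_add_Ioi z
  nlinarith [setIntegral_nonneg (μ := volume) (measurableSet_Ioi : MeasurableSet (Ioi z))
    (fun x _ => stdPhi_nonneg x)]

lemma integral_stdPhi_Ioi (b : ℝ) : ∫ z in Ioi b, stdPhi z = stdPhiCdf (-b) := by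
  calc ∫ z in Ioi b, stdPhi z = ∫ z in Ioi b, stdPhi (-z) := by simp_rw [stdPhi_neg]
    _ = ∫ z in Iic (-b), stdPhi z := integral_comp_neg_Ioi b stdPhi
    _ = stdPhiCdf (-b) := rfl

lemma stdPhiCdf_neg (z : ℝ) : stdPhiCdf (-z) = 1 - stdPhiCdf z := by
  rw [← integral_stdPhi_Ioi]; linarith [stdPhiCdf_add_Ioi z]

lemma map_affine {a : ℝ} (ha : 0 < a) (b : ℝ) :
    Measure.map (fun x : ℝ => a * x + b) volume = ENNReal.ofReal a⁻¹ • volume := by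
  have h1 : (fun x : ℝ => a * x + b) = (fun y : ℝ => y + b) ∘ (fun x : ℝ => a * x) := rfl
  rw [h1, ← Measure.map_map (by fun_prop) (by fun_prop),
    show (fun x : ℝ => a * x) = (a * ·) from rfl, Real.map_volume_mul_left ha.ne',
    Measure.map_smul, map_add_right_eq_self volume b, abs_of_pos (by positivity)]

lemma setIntegral_affine {f : ℝ → ℝ} (hf : AEStronglyMeasurable f volume) {a : ℝ}
    (ha : 0 < a) (b : ℝ) {s : Set ℝ} (hs : MeasurableSet s) :
    ∫ x in (fun x => a * x + b) ⁻¹' s, f (a * x + b) = a⁻¹ * ∫ y in s, f y := by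
  have hmap := map_affine ha b
  have hf' : AEStronglyMeasurable f (Measure.map (fun x : ℝ => a * x + b) volume) := by
    rw [hmap]; exact hf.mono_ac Measure.smul_absolutelyContinuous
  rw [← setIntegral_map hs hf' (by fun_prop), hmap, Measure.restrict_smul,
    integral_smul_measure, ENNReal.toReal_ofReal (by positivity), smul_eq_mul]

lemma integral_affine_Iic {f : ℝ → ℝ} (hf : AEStronglyMeasurable f volume) {a : ℝ}
    (ha : 0 < a) (b c : ℝ) :
    ∫ x in Iic c, f (a * x + b) = a⁻¹ * ∫ y in Iic (a * c + b), f y := by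
  have hpre : (fun x : ℝ => a * x + b) ⁻¹' (Iic (a * c + b)) = Iic c := by
    ext x; simp only [mem_preimage, mem_Iic]
    constructor <;> intro h <;> nlinarith
  rw [← setIntegral_affine hf ha b measurableSet_Iic, hpre]

lemma integral_affine_Ioi {f : ℝ → ℝ} (hf : AEStronglyMeasurable f volume) {a : ℝ}
    (ha : 0 < a) (b c : ℝ) :
    ∫ x in Ioi c, f (a * x + b) = a⁻¹ * ∫ y in Ioi (a * c + b), f y := by
  have hpre : (fun x : ℝ => a * x + b) ⁻¹' (Ioi (a * c + b)) = Ioi c := by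
    ext x; simp only [mem_preimage, mem_Ioi]
    constructor <;> intro h <;> nlinarith
  rw [← setIntegral_affine hf ha b measurableSet_Ioi, hpre]

lemma integral_affine_univ {f : ℝ → ℝ} (hf : AEStronglyMeasurable f volume) {a : ℝ}
    (ha : 0 < a) (b : ℝ) :
    ∫ x, f (a * x + b) = a⁻¹ * ∫ y, f y := by
  have h := setIntegral_affine hf ha b MeasurableSet.univ
  rw [preimage_univ, Measure.restrict_univ] at h
  exact h

lemma stdPhi_mul_stdPhi {p q r s : ℝ} (h : p^2 + q^2 = r^2 + s^2) :
    stdPhi p * stdPhi q = stdPhi r * stdPhi s := by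
  simp only [stdPhi]
  rw [mul_mul_mul_comm, ← Real.exp_add, mul_mul_mul_comm, ← Real.exp_add]
  have he : -p ^ 2 / 2 + -q ^ 2 / 2 = -r ^ 2 / 2 + -s ^ 2 / 2 := by linarith
  rw [he]

lemma integral_stdPhi_affine {a : ℝ} (ha : 0 < a) (b : ℝ) :
    ∫ v, stdPhi (a * v + b) = a⁻¹ := by
  rw [integral_affine_univ continuous_stdPhi.aestronglyMeasurable ha b, integral_stdPhi, mul_one]

lemma stdPhiCdf_shift (m d : ℝ) : stdPhiCdf (m + d) = ∫ t in Iic m, stdPhi (t + d) := by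
  have h := integral_affine_Iic continuous_stdPhi.aestronglyMeasurable one_pos d m
  simp only [one_mul, inv_one] at h
  rw [stdPhiCdf, ← h]

lemma stdPhiCdf_scale {q : ℝ} (hq : 0 < q) (m : ℝ) :
    ∫ t in Iic m, stdPhi (t / q) = q * stdPhiCdf (m / q) := by
  have h := integral_affine_Iic continuous_stdPhi.aestronglyMeasurable
    (inv_pos.2 hq) 0 m
  rw [stdPhiCdf]
  calc ∫ t in Iic m, stdPhi (t / q) = ∫ t in Iic m, stdPhi (q⁻¹ * t + 0) := by
        congr 1 with t; rw [add_zero, div_eq_inv_mul]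
    _ = q * ∫ y in Iic (q⁻¹ * m + 0), stdPhi y := by rw [h, inv_inv]
    _ = q * ∫ u in Iic (m / q), stdPhi u := by rw [add_zero, div_eq_inv_mul]

lemma integrable_kernel (c : ℝ) :
    Integrable (fun p : ℝ × ℝ => stdPhi p.1 * stdPhi (p.2 + c * p.1))
      (volume.prod volume) := by
  have hT : MeasurePreserving (fun p : ℝ × ℝ => (p.1, p.2 + c * p.1))
      ((volume : Measure ℝ).prod volume) ((volume : Measure ℝ).prod volume) := by
    have := MeasurePreserving.skew_product (f := fun x : ℝ => x)
      (μa := (volume : Measure ℝ)) (μb := (volume : Measure ℝ))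
      (μc := (volume : Measure ℝ)) (μd := (volume : Measure ℝ))
      (MeasurePreserving.id _) (g := fun a t : ℝ => t + c * a)
      (by fun_prop) (Filter.Eventually.of_forall fun a => map_add_right_eq_self volume (c * a))
    exact this
  have hI : Integrable (fun q : ℝ × ℝ => stdPhi q.1 * stdPhi q.2)
      ((volume : Measure ℝ).prod volume) := integrable_stdPhi.mul_prod integrable_stdPhi
  have := (hT.integrable_comp hI.aestronglyMeasurable).2 hI
  exact this

lemma lemmaA (c m : ℝ) :
    ∫ v, stdPhiCdf (c * v + m) * stdPhi v = stdPhiCdf (m / Real.sqrt (1 + c ^ 2)) := by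
  set q := Real.sqrt (1 + c ^ 2) with hqdef
  have hq : 0 < q := Real.sqrt_pos.2 (by positivity)
  have hq2 : q ^ 2 = 1 + c ^ 2 := Real.sq_sqrt (by positivity)
  set F : ℝ × ℝ → ℝ :=
    (univ ×ˢ Iic m).indicator (fun p : ℝ × ℝ => stdPhi p.1 * stdPhi (p.2 + c * p.1)) with hF
  have hFint : Integrable F (volume.prod volume) :=
    (integrable_kernel c).indicator (MeasurableSet.univ.prod measurableSet_Iic)
  have hFeq : ∀ v t : ℝ, F (v, t) = (Iic m).indicator
      (fun t => stdPhi v * stdPhi (t + c * v)) t := by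
    intro v t
    by_cases ht : t ∈ Iic m <;>
      simp [hF, indicator, ht]
  calc ∫ v, stdPhiCdf (c * v + m) * stdPhi v
      = ∫ v, ∫ t, F (v, t) := by
        congr 1 with v
        rw [show c * v + m = m + c * v by ring, stdPhiCdf_shift,
          ← integral_mul_const]
        rw [← integral_indicator measurableSet_Iic]
        congr 1 with t
        rw [hFeq v t]
        by_cases ht : t ∈ Iic m <;> simp [indicator, ht, mul_comm]
    _ = ∫ t, ∫ v, F (v, t) := integral_integral_swap hFint
    _ = ∫ t, (Iic m).indicator (fun t => stdPhi (t / q) * q⁻¹) t := by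
        congr 1 with t
        by_cases ht : t ∈ Iic m
        · rw [indicator_of_mem ht]
          have hcs : ∀ v : ℝ, F (v, t) = stdPhi (t / q) * stdPhi (q * v + c * t / q) := by
            intro v
            rw [hFeq v t, indicator_of_mem ht]
            exact stdPhi_mul_stdPhi (by
              have h2 : q ^ 2 = 1 + c ^ 2 := hq2
              have hqne : q ≠ 0 := hq.ne'
              field_simp
              linear_combination (t ^ 2 - v ^ 2 * q ^ 2) * h2)
          rw [show (fun v => F (v, t)) = fun v => stdPhi (t / q) * stdPhi (q * v + c * t / q)
            from funext hcs, integral_const_mul, integral_stdPhi_affine hq]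
        · simp only [indicator_of_notMem ht]
          rw [show (fun v => F (v, t)) = fun _ => 0 from funext fun v => by
            rw [hFeq v t, indicator_of_notMem ht], integral_zero]
    _ = ∫ t in Iic m, stdPhi (t / q) * q⁻¹ := integral_indicator measurableSet_Iic
    _ = stdPhiCdf (m / q) := by
        rw [integral_mul_const, stdPhiCdf_scale hq, mul_comm, ← mul_assoc,
          inv_mul_cancel₀ hq.ne', one_mul]

lemma integrable_stdPhi_div {s : ℝ} (hs : 0 < s) :
    Integrable (fun y => stdPhi (y / s)) volume := by
  have h : Integrable (fun y : ℝ => Real.exp (-(1 / (2 * s ^ 2)) * y ^ 2)) :=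
    integrable_exp_neg_mul_sq (by positivity)
  refine (h.const_mul ((2 * π) ^ (-(1 / 2) : ℝ))).congr
    (Filter.Eventually.of_forall fun y => ?_)
  have harg : -(1 / (2 * s ^ 2)) * y ^ 2 = -(y / s) ^ 2 / 2 := by
    ring
  simp only [stdPhi]
  rw [harg]

lemma integrable_kernel2 (k : ℝ) {s : ℝ} (hs : 0 < s) :
    Integrable (fun p : ℝ × ℝ => stdPhi p.1 * stdPhi ((p.2 + k * p.1) / s))
      (volume.prod volume) := by
  have hT : MeasurePreserving (fun p : ℝ × ℝ => (p.1, p.2 + k * p.1))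
      ((volume : Measure ℝ).prod volume) ((volume : Measure ℝ).prod volume) :=
    MeasurePreserving.skew_product (f := fun x : ℝ => x)
      (MeasurePreserving.id _) (g := fun a t : ℝ => t + k * a)
      (by fun_prop) (Filter.Eventually.of_forall fun a => map_add_right_eq_self volume (k * a))
  have hI : Integrable (fun q : ℝ × ℝ => stdPhi q.1 * stdPhi (q.2 / s))
      ((volume : Measure ℝ).prod volume) :=
    integrable_stdPhi.mul_prod (integrable_stdPhi_div hs)
  exact (hT.integrable_comp hI.aestronglyMeasurable).2 hI

/-- The key swap: turning a `Φ((k z - β)/s)` factor into an outer integral over `Iic (-β)`. -/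
lemma lemmaT {k s : ℝ} (hs : 0 < s) (hks : k ^ 2 + s ^ 2 = 1) (β : ℝ)
    {g : ℝ → ℝ} (hgm : Measurable g) (hg1 : ∀ z, ‖g z‖ ≤ 1) :
    ∫ z, g z * stdPhiCdf ((k * z - β) / s) * stdPhi z
      = ∫ u in Iic (-β), (∫ v, g (s * v - k * u) * stdPhi v) * stdPhi u := by
  have hrep : ∀ z, stdPhiCdf ((k * z - β) / s)
      = s⁻¹ * ∫ u in Iic (-β), stdPhi (s⁻¹ * u + k * z / s) := by
    intro z
    rw [integral_affine_Iic continuous_stdPhi.aestronglyMeasurable (inv_pos.2 hs) (k * z / s) (-β),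
      inv_inv, ← mul_assoc, inv_mul_cancel₀ hs.ne', one_mul]
    congr 1
    field_simp
    ring
  set F : ℝ × ℝ → ℝ := (univ ×ˢ Iic (-β)).indicator
    (fun p => g p.1 * (stdPhi p.1 * (s⁻¹ * stdPhi ((p.2 + k * p.1) / s)))) with hF
  have hFeq : ∀ z u : ℝ, F (z, u) = (Iic (-β)).indicator
      (fun u => g z * (stdPhi z * (s⁻¹ * stdPhi ((u + k * z) / s)))) u := by
    intro z u
    by_cases hu : u ∈ Iic (-β) <;> simp [hF, indicator, hu]
  have hFint : Integrable F (volume.prod volume) := by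
    refine Integrable.indicator ?_ (MeasurableSet.univ.prod measurableSet_Iic)
    have hker := ((integrable_kernel2 k hs).const_mul s⁻¹)
    have hker2 : Integrable (fun p : ℝ × ℝ => stdPhi p.1 * (s⁻¹ * stdPhi ((p.2 + k * p.1) / s)))
        (volume.prod volume) := by
      refine hker.congr (Filter.Eventually.of_forall fun p => by ring)
    exact hker2.bdd_mul ((hgm.comp measurable_fst).aestronglyMeasurable) (Filter.Eventually.of_forall fun p => hg1 p.1)
  calc ∫ z, g z * stdPhiCdf ((k * z - β) / s) * stdPhi z
      = ∫ z, ∫ u, F (z, u) := by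
        congr 1 with z
        have h1 : (fun u => F (z, u)) = fun u => (Iic (-β)).indicator
            (fun u => g z * (stdPhi z * (s⁻¹ * stdPhi ((u + k * z) / s)))) u := funext (hFeq z)
        rw [h1, integral_indicator measurableSet_Iic, integral_const_mul, integral_const_mul,
          integral_const_mul, hrep z]
        have harg : (fun u => stdPhi ((u + k * z) / s)) = fun u => stdPhi (s⁻¹ * u + k * z / s) := by
          funext u; congr 1; field_simp
        rw [harg]
        ring
    _ = ∫ u, ∫ z, F (z, u) := integral_integral_swap hFint
    _ = ∫ u in Iic (-β), (∫ v, g (s * v - k * u) * stdPhi v) * stdPhi u := by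
        rw [← integral_indicator measurableSet_Iic]
        congr 1 with u
        by_cases hu : u ∈ Iic (-β)
        · rw [indicator_of_mem hu]
          have hcs : ∀ z : ℝ, F (z, u)
              = (g z * stdPhi ((z + k * u) / s)) * (s⁻¹ * stdPhi u) := by
            intro z
            rw [hFeq z u, indicator_of_mem hu]
            have := stdPhi_mul_stdPhi (p := z) (q := (u + k * z)/s) (r := (z + k * u)/s) (s := u)
              (by field_simp; linear_combination (z^2 - u^2) * hks)
            calc g z * (stdPhi z * (s⁻¹ * stdPhi ((u + k * z) / s)))
                = g z * s⁻¹ * (stdPhi z * stdPhi ((u + k * z) / s)) := by ring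
              _ = g z * s⁻¹ * (stdPhi ((z + k * u) / s) * stdPhi u) := by rw [this]
              _ = (g z * stdPhi ((z + k * u) / s)) * (s⁻¹ * stdPhi u) := by ring
          rw [funext hcs, integral_mul_const]
          have haff := integral_affine_univ (f := fun y => g y * stdPhi ((y + k * u) / s))
            ((hgm.mul (continuous_stdPhi.measurable.comp (by fun_prop))).aestronglyMeasurable)
            hs (-(k * u))
          have : (fun v => g (s * v + -(k * u)) * stdPhi ((s * v + -(k * u) + k * u) / s))
              = fun v => g (s * v - k * u) * stdPhi v := by
            funext v
            rw [show s * v + -(k * u) + k * u = s * v by ring, mul_comm s v,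
              mul_div_assoc, div_self hs.ne', mul_one, sub_eq_add_neg]
          rw [this] at haff
          rw [show (∫ z, g z * stdPhi ((z + k * u) / s)) = s * ∫ v, g (s * v - k * u) * stdPhi v
            from by rw [haff]; field_simp]
          calc (s * ∫ v, g (s * v - k * u) * stdPhi v) * (s⁻¹ * stdPhi u)
              = (s * s⁻¹) * ((∫ v, g (s * v - k * u) * stdPhi v) * stdPhi u) := by ring
            _ = (∫ v, g (s * v - k * u) * stdPhi v) * stdPhi u := by
                rw [mul_inv_cancel₀ hs.ne', one_mul]
        · rw [indicator_of_notMem hu,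
            show (fun z => F (z, u)) = fun _ => 0 from funext fun z => by
              rw [hFeq z u, indicator_of_notMem hu], integral_zero]

lemma lemA' {k s : ℝ} (hs : 0 < s) (hks : k ^ 2 + s ^ 2 = 1) (m : ℝ) :
    ∫ z, stdPhiCdf ((k * z + m) / s) * stdPhi z = stdPhiCdf m := by
  have harg : ∀ z : ℝ, (k * z + m) / s = (k / s) * z + m / s := fun z => by ring
  simp_rw [harg]
  rw [lemmaA (k / s) (m / s)]
  congr 1
  have h1 : 1 + (k / s) ^ 2 = (s⁻¹) ^ 2 := by
    rw [div_pow, inv_pow]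
    field_simp
    linarith
  rw [h1, Real.sqrt_sq (inv_pos.2 hs).le]
  field_simp

lemma bvn_reduction (μ1 μ2 σ1 σ2 ρ : ℝ) (hσ1 : 0 < σ1) (hσ2 : 0 < σ2)
    (hρ : ρ ∈ Set.Ioo (-1 : ℝ) 1) :
    (∫ s2 in Set.Ioi (0 : ℝ), ∫ s1 in Set.Ioi (0 : ℝ), bvnDensity μ1 μ2 σ1 σ2 ρ s1 s2)
      = ∫ u in Ioi (-(μ2 / σ2)),
          stdPhiCdf ((ρ * u + μ1 / σ1) / Real.sqrt (1 - ρ ^ 2)) * stdPhi u := by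
  obtain ⟨hρ1, hρ2⟩ := hρ
  have hρw : (0:ℝ) < 1 - ρ ^ 2 := by nlinarith
  set w := Real.sqrt (1 - ρ ^ 2) with hwdef
  have hw : 0 < w := Real.sqrt_pos.2 hρw
  have hw2 : w ^ 2 = 1 - ρ ^ 2 := Real.sq_sqrt hρw.le
  set A := σ1 * w with hAdef
  have hA : 0 < A := by positivity
  have hinner : ∀ s2 : ℝ, (∫ s1 in Set.Ioi (0 : ℝ), bvnDensity μ1 μ2 σ1 σ2 ρ s1 s2)
      = σ2⁻¹ * (stdPhiCdf ((ρ * ((s2 - μ2) / σ2) + μ1 / σ1) / w)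
          * stdPhi ((s2 - μ2) / σ2)) := by
    intro s2
    set u := (s2 - μ2) / σ2 with hudef
    set D := μ1 + ρ * σ1 * u with hDdef
    have hpt : ∀ s1, bvnDensity μ1 μ2 σ1 σ2 ρ s1 s2
        = (σ2⁻¹ * stdPhi u) * (A⁻¹ * stdPhi ((s1 - D) / A)) := by
      intro s1
      rw [bvnDensity, stdPhi, stdPhi]
      rw [show (σ2⁻¹ * ((2 * π) ^ (-(1/2) : ℝ) * Real.exp (-u ^ 2 / 2)))
            * (A⁻¹ * ((2 * π) ^ (-(1/2) : ℝ) * Real.exp (-((s1 - D) / A) ^ 2 / 2)))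
          = ((2 * π) ^ (-(1/2) : ℝ) * (2 * π) ^ (-(1/2) : ℝ) * (σ2⁻¹ * A⁻¹))
            * (Real.exp (-u ^ 2 / 2) * Real.exp (-((s1 - D) / A) ^ 2 / 2)) from by ring]
      rw [← Real.exp_add, ← Real.rpow_add twoPiPos]
      congr 1
      · rw [show (-(1/2) + -(1/2) : ℝ) = -1 by norm_num, Real.rpow_neg_one, hAdef]
        rw [show 2 * π * σ1 * σ2 * w = (2 * π) * (σ2 * (σ1 * w)) from by ring, mul_inv,
          mul_inv]
        ring
      · have hs2u : s2 - μ2 = σ2 * u := by rw [hudef]; field_simp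
        rw [hs2u, hDdef, hAdef]
        rw [show σ1 ^ 2 * (1 - ρ ^ 2) = (σ1 * w) ^ 2 from by rw [mul_pow, hw2]]
        field_simp
        ring
    calc (∫ s1 in Set.Ioi (0 : ℝ), bvnDensity μ1 μ2 σ1 σ2 ρ s1 s2)
        = ∫ s1 in Set.Ioi (0 : ℝ), (σ2⁻¹ * stdPhi u) * (A⁻¹ * stdPhi ((s1 - D) / A)) := by
          rw [funext hpt]
      _ = (σ2⁻¹ * stdPhi u) * (A⁻¹ * ∫ s1 in Set.Ioi (0:ℝ), stdPhi ((s1 - D) / A)) := by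
          rw [integral_const_mul, integral_const_mul]
      _ = σ2⁻¹ * (stdPhiCdf ((ρ * u + μ1 / σ1) / w) * stdPhi u) := by
          have harg : (fun s1 => stdPhi ((s1 - D) / A)) = fun s1 => stdPhi (A⁻¹ * s1 + -D / A) := by
            funext s1; congr 1; field_simp; ring
          rw [harg, integral_affine_Ioi continuous_stdPhi.aestronglyMeasurable (inv_pos.2 hA)
            (-D / A) 0, inv_inv, mul_zero, zero_add, integral_stdPhi_Ioi, neg_div, neg_neg]
          rw [show D / A = (ρ * u + μ1 / σ1) / w from by
            rw [hDdef, hAdef]; field_simp; ring]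
          field_simp
  calc (∫ s2 in Set.Ioi (0 : ℝ), ∫ s1 in Set.Ioi (0 : ℝ), bvnDensity μ1 μ2 σ1 σ2 ρ s1 s2)
      = ∫ s2 in Set.Ioi (0:ℝ), σ2⁻¹ * ((fun x => stdPhiCdf ((ρ * x + μ1 / σ1) / w) * stdPhi x)
          (σ2⁻¹ * s2 + -(μ2 / σ2))) := by
        rw [funext hinner]
        congr 1 with s2
        have : (s2 - μ2) / σ2 = σ2⁻¹ * s2 + -(μ2 / σ2) := by field_simp; ring
        rw [this]
    _ = ∫ u in Ioi (-(μ2 / σ2)),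
          stdPhiCdf ((ρ * u + μ1 / σ1) / w) * stdPhi u := by
        rw [integral_const_mul, integral_affine_Ioi
          (f := fun x => stdPhiCdf ((ρ * x + μ1 / σ1) / w) * stdPhi x)
          ((measurable_stdPhiCdf.comp (by fun_prop)).mul
            continuous_stdPhi.measurable).aestronglyMeasurable
          (inv_pos.2 hσ2) (-(μ2 / σ2)) 0, inv_inv, mul_zero, zero_add, ← mul_assoc,
          inv_mul_cancel₀ hσ2.ne', one_mul]

theorem prob_first_quadrant_formula
    (μ1 μ2 σ1 σ2 ρ : ℝ) (hσ1 : 0 < σ1) (hσ2 : 0 < σ2) (hρ : ρ ∈ Set.Ioo (-1 : ℝ) 1) :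
    (∫ s2 in Set.Ioi (0 : ℝ), ∫ s1 in Set.Ioi (0 : ℝ), bvnDensity μ1 μ2 σ1 σ2 ρ s1 s2) =
      1 -
        (∫ z : ℝ, stdPhiCdf ((Real.sqrt |ρ| * z - μ1 / σ1) / Real.sqrt (1 - |ρ|)) *
          stdPhi z) -
        (∫ z : ℝ, stdPhiCdf ((Real.sign ρ * Real.sqrt |ρ| * z - μ2 / σ2) /
          Real.sqrt (1 - |ρ|)) * stdPhi z) +
        ∫ z : ℝ, stdPhiCdf ((Real.sqrt |ρ| * z - μ1 / σ1) / Real.sqrt (1 - |ρ|)) *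
          stdPhiCdf ((Real.sign ρ * Real.sqrt |ρ| * z - μ2 / σ2) /
            Real.sqrt (1 - |ρ|)) * stdPhi z := by
  have E4 := bvn_reduction μ1 μ2 σ1 σ2 ρ hσ1 hσ2 hρ
  obtain ⟨hρ1, hρ2⟩ := hρ
  set α := μ1 / σ1 with hαdef
  set β := μ2 / σ2 with hβdef
  set r := |ρ| with hrdef
  have hr0 : 0 ≤ r := abs_nonneg ρ
  have hr1 : r < 1 := abs_lt.2 ⟨hρ1, hρ2⟩
  set sr := Real.sqrt r with hsrdef
  have hsr2 : sr ^ 2 = r := Real.sq_sqrt hr0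
  set s := Real.sqrt (1 - r) with hsdef
  have hs : 0 < s := Real.sqrt_pos.2 (by linarith)
  have hs2 : s ^ 2 = 1 - r := Real.sq_sqrt (by linarith)
  set k := Real.sign ρ * sr with hkdef
  have hk2 : k ^ 2 = r := by
    rw [hkdef, mul_pow, hsr2]
    rcases lt_trichotomy ρ 0 with h | h | h
    · rw [Real.sign_of_neg h]; norm_num
    · rw [hrdef, h, Real.sign_zero, abs_zero]; ring
    · rw [Real.sign_of_pos h]; norm_num
  have hks : k ^ 2 + s ^ 2 = 1 := by rw [hk2, hs2]; ring
  have hsrk : sr * k = ρ := by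
    rw [hkdef, show sr * (Real.sign ρ * sr) = Real.sign ρ * sr ^ 2 from by ring, hsr2,
      hrdef]
    rcases lt_trichotomy ρ 0 with h | h | h
    · rw [Real.sign_of_neg h, abs_of_neg h]; ring
    · rw [h, Real.sign_zero, abs_zero, mul_zero]
    · rw [Real.sign_of_pos h, abs_of_pos h]; ring
  have hρq : (0:ℝ) < 1 - ρ ^ 2 := by nlinarith
  set w := Real.sqrt (1 - ρ ^ 2) with hwdef
  have hw : 0 < w := Real.sqrt_pos.2 hρq
  have hw2 : w ^ 2 = 1 - ρ ^ 2 := Real.sq_sqrt hρq.le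
  have hρw : ρ ^ 2 + w ^ 2 = 1 := by rw [hw2]; ring
  have hsw : s * Real.sqrt (1 + r) = w := by
    rw [hsdef, hwdef, ← Real.sqrt_mul (by linarith : (0:ℝ) ≤ 1 - r)]
    congr 1
    have habs : r ^ 2 = ρ ^ 2 := by rw [hrdef, sq_abs]
    nlinarith [habs]
  -- single-factor integrals
  have E1 : (∫ z : ℝ, stdPhiCdf ((sr * z - α) / s) * stdPhi z) = stdPhiCdf (-α) := by
    simp_rw [sub_eq_add_neg]
    exact lemA' hs (by rw [hsr2, hs2]; ring) (-α)
  have E2 : (∫ z : ℝ, stdPhiCdf ((k * z - β) / s) * stdPhi z) = stdPhiCdf (-β) := by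
    simp_rw [sub_eq_add_neg]
    exact lemA' hs hks (-β)
  -- the function G and its integrals
  have hGint : Integrable (fun u => stdPhiCdf ((ρ * u + α) / w) * stdPhi u) volume := by
    refine integrable_stdPhi.bdd_mul (c := 1)
      ((measurable_stdPhiCdf.comp (by fun_prop)).aestronglyMeasurable) (Filter.Eventually.of_forall fun x => ?_)
    rw [Real.norm_eq_abs, abs_le]
    exact ⟨by linarith [stdPhiCdf_nonneg ((ρ * x + α) / w)], stdPhiCdf_le_one _⟩
  have E5 : (∫ u, stdPhiCdf ((ρ * u + α) / w) * stdPhi u) = stdPhiCdf α := lemA' hw hρw α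
  have Esplit : (∫ u in Iic (-β), stdPhiCdf ((ρ * u + α) / w) * stdPhi u)
      + (∫ u in Ioi (-β), stdPhiCdf ((ρ * u + α) / w) * stdPhi u) = stdPhiCdf α := by
    rw [intervalIntegral.integral_Iic_add_Ioi hGint.integrableOn hGint.integrableOn, E5]
  -- the product term
  have hg1 : ∀ z : ℝ, ‖stdPhiCdf ((sr * z - α) / s)‖ ≤ 1 := fun z => by
    rw [Real.norm_eq_abs, abs_le]
    exact ⟨by linarith [stdPhiCdf_nonneg ((sr * z - α) / s)], stdPhiCdf_le_one _⟩
  have E3 : (∫ z, stdPhiCdf ((sr * z - α) / s) * stdPhiCdf ((k * z - β) / s) * stdPhi z)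
      = stdPhiCdf (-β) - ∫ u in Iic (-β), stdPhiCdf ((ρ * u + α) / w) * stdPhi u := by
    rw [lemmaT hs hks β (g := fun z => stdPhiCdf ((sr * z - α) / s))
      (measurable_stdPhiCdf.comp (by fun_prop)) hg1]
    have hinner : ∀ u : ℝ, (∫ v, stdPhiCdf ((sr * (s * v - k * u) - α) / s) * stdPhi v)
        = stdPhiCdf (-((ρ * u + α) / w)) := by
      intro u
      have harg : ∀ v : ℝ, (sr * (s * v - k * u) - α) / s = sr * v + (-(ρ * u) - α) / s := by
        intro v; rw [← hsrk]; field_simp; ring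
      simp_rw [harg]
      rw [lemmaA sr ((-(ρ * u) - α) / s)]
      congr 1
      rw [hsr2, div_div, hsw]
      ring
    calc ∫ u in Iic (-β), (∫ v, stdPhiCdf ((sr * (s * v - k * u) - α) / s) * stdPhi v)
          * stdPhi u
        = ∫ u in Iic (-β), (1 - stdPhiCdf ((ρ * u + α) / w)) * stdPhi u := by
          refine setIntegral_congr_fun measurableSet_Iic fun u _ => ?_
          rw [hinner u, stdPhiCdf_neg]
      _ = (∫ u in Iic (-β), stdPhi u)
          - ∫ u in Iic (-β), stdPhiCdf ((ρ * u + α) / w) * stdPhi u := by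
          simp_rw [sub_mul, one_mul]
          rw [integral_sub integrable_stdPhi.integrableOn hGint.integrableOn]
      _ = stdPhiCdf (-β) - ∫ u in Iic (-β), stdPhiCdf ((ρ * u + α) / w) * stdPhi u := by
          rw [show (∫ u in Iic (-β), stdPhi u) = stdPhiCdf (-β) from rfl]
  -- put everything together
  rw [E4, E1, E2, E3]
  have hcomm : (∫ u in Ioi (-β), stdPhiCdf ((ρ * u + α) / w) * stdPhi u)
      = ∫ u in Ioi (-β), stdPhiCdf ((ρ * u + α) / w) * stdPhi u := rfl
  have hna := stdPhiCdf_neg α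
  linarith [Esplit]
end

section
/- Let (X1, X2) be a random vector on ℝ² whose law has density f with respect to Lebesgue measure, where f is the bivariate normal density with means μ1, μ2 ∈ ℝ, standard deviations σ1, σ2 > 0 and correlation ρ ∈ (−1,1). Then for every x ∈ ℝ: P{X2 > 0 and X1 ≤ x·X2} + P{X2 < 0 and X1 ≥ x·X2} = ∫_{−∞}^x ( g(t) + g̃(t) ) dt, where g(t) := ∫₀^∞ s·f(t·s, s) ds and g̃(t) := −∫_{−∞}^0 s·f(t·s, s) ds. In other words, the (unconditioned) quotient X1/X2 has density g + g̃. -/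
open Real MeasureTheory ProbabilityTheory Set Filter

set_option maxHeartbeats 1000000 in
lemma bvn_nonneg (μ1 μ2 σ1 σ2 ρ : ℝ) (hσ1 : 0 < σ1) (hσ2 : 0 < σ2) (s1 s2 : ℝ) :
    0 ≤ bvnDensity μ1 μ2 σ1 σ2 ρ s1 s2 := by
  unfold bvnDensity; positivity

lemma bvn_meas (μ1 μ2 σ1 σ2 ρ : ℝ) :
    Measurable (fun p : ℝ × ℝ => bvnDensity μ1 μ2 σ1 σ2 ρ p.1 p.2) := by
  unfold bvnDensity; fun_prop

lemma bvn_le (μ1 μ2 σ1 σ2 ρ : ℝ) (hσ1 : 0 < σ1) (hσ2 : 0 < σ2)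
    (hρ : ρ ∈ Set.Ioo (-1 : ℝ) 1) (s1 s2 : ℝ) :
    bvnDensity μ1 μ2 σ1 σ2 ρ s1 s2 ≤
      (2 * π * σ1 * σ2 * Real.sqrt (1 - ρ ^ 2))⁻¹ *
        Real.exp (-(1 / (2 * σ2 ^ 2)) * (s2 - μ2) ^ 2) := by
  have h1 : (0:ℝ) < 1 - ρ ^ 2 := by
    obtain ⟨h, h'⟩ := hρ; nlinarith
  unfold bvnDensity
  gcongr (2 * π * σ1 * σ2 * Real.sqrt (1 - ρ ^ 2))⁻¹ * Real.exp ?_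
  · have hq : 0 ≤ (s1 - μ1 - ρ * (σ1 / σ2) * (s2 - μ2)) ^ 2 / (σ1 ^ 2 * (1 - ρ ^ 2)) := by
      positivity
    have h2 : (1 / (2 * σ2 ^ 2)) * (s2 - μ2) ^ 2 = (1/2) * (((s2 - μ2)/σ2) ^ 2) := by
      rw [div_pow]; field_simp
    nlinarith [hq]

lemma bvn_slice_integrable (μ1 μ2 σ1 σ2 ρ : ℝ) (hσ1 : 0 < σ1) (hσ2 : 0 < σ2)
    (hρ : ρ ∈ Set.Ioo (-1 : ℝ) 1) (t : ℝ) :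
    Integrable (fun s => |s| * bvnDensity μ1 μ2 σ1 σ2 ρ (t * s) s) := by
  set C : ℝ := (2 * π * σ1 * σ2 * Real.sqrt (1 - ρ ^ 2))⁻¹ with hC
  have hC0 : 0 ≤ C := by
    have h1 : (0:ℝ) < 1 - ρ ^ 2 := by obtain ⟨h, h'⟩ := hρ; nlinarith
    positivity
  have hb : (0:ℝ) < 1 / (2 * σ2 ^ 2) := by positivity
  set b : ℝ := 1 / (2 * σ2 ^ 2) with hbdef
  -- integrable auxiliary bound
  have habs : Integrable (fun u : ℝ => |u| * Real.exp (-b * u ^ 2)) := by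
    have := (integrable_mul_exp_neg_mul_sq hb).abs
    refine this.congr (Filter.Eventually.of_forall fun u => ?_)
    simp only
    rw [abs_mul, abs_of_pos (Real.exp_pos _)]
  have hg0 : Integrable (fun u : ℝ => |u + μ2| * (C * Real.exp (-b * u ^ 2))) := by
    have hbig : Integrable (fun u : ℝ => C * (|u| * Real.exp (-b * u ^ 2)) +
        (|μ2| * C) * Real.exp (-b * u ^ 2)) :=
      (habs.const_mul C).add ((integrable_exp_neg_mul_sq hb).const_mul _)
    refine hbig.mono' ?_ (Filter.Eventually.of_forall fun u => ?_)
    · apply Measurable.aestronglyMeasurable; fun_prop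
    · rw [Real.norm_eq_abs, abs_of_nonneg (by positivity)]
      have h1 : |u + μ2| ≤ |u| + |μ2| := abs_add_le u μ2
      have h2 : (0:ℝ) ≤ C * Real.exp (-b * u ^ 2) := by positivity
      nlinarith [Real.exp_pos (-b * u^2), abs_nonneg u, abs_nonneg μ2]
  have hg : Integrable (fun s : ℝ => |s| * (C * Real.exp (-b * (s - μ2) ^ 2))) := by
    have := hg0.comp_sub_right μ2
    refine this.congr (Filter.Eventually.of_forall fun s => ?_)
    simp only [Function.comp]
    rw [sub_add_cancel]
  have hmeas : Measurable (fun s : ℝ => |s| * bvnDensity μ1 μ2 σ1 σ2 ρ (t * s) s) := by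
    unfold bvnDensity; fun_prop
  refine hg.mono' hmeas.aestronglyMeasurable (Filter.Eventually.of_forall fun s => ?_)
  · rw [Real.norm_eq_abs, abs_of_nonneg
      (mul_nonneg (abs_nonneg s) (bvn_nonneg μ1 μ2 σ1 σ2 ρ hσ1 hσ2 _ _))]
    exact mul_le_mul_of_nonneg_left (bvn_le μ1 μ2 σ1 σ2 ρ hσ1 hσ2 hρ (t * s) s) (abs_nonneg s)

lemma bvn_meas_uncurry (μ1 μ2 σ1 σ2 ρ : ℝ) :
    Measurable (Function.uncurry fun s t : ℝ =>
      ENNReal.ofReal (|s| * bvnDensity μ1 μ2 σ1 σ2 ρ (t * s) s)) := by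
  unfold bvnDensity Function.uncurry; fun_prop

lemma bvn_meas_slice (μ1 μ2 σ1 σ2 ρ t : ℝ) :
    Measurable (fun s : ℝ => ENNReal.ofReal (|s| * bvnDensity μ1 μ2 σ1 σ2 ρ (t * s) s)) := by
  unfold bvnDensity; fun_prop

lemma bvn_core (μ1 μ2 σ1 σ2 ρ : ℝ) {B : Set ℝ} (hB : MeasurableSet B) (hB0 : (0:ℝ) ∉ B)
    {A : Set ℝ} (hA : MeasurableSet A) :
    ∫⁻ p in {p : ℝ × ℝ | p.2 ∈ B ∧ p.1 / p.2 ∈ A},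
        ENNReal.ofReal (bvnDensity μ1 μ2 σ1 σ2 ρ p.1 p.2) =
      ∫⁻ t in A, ∫⁻ s in B, ENNReal.ofReal (|s| * bvnDensity μ1 μ2 σ1 σ2 ρ (t * s) s) := by
  set F : ℝ × ℝ → ENNReal := fun p => ENNReal.ofReal (bvnDensity μ1 μ2 σ1 σ2 ρ p.1 p.2) with hF
  have hFmeas : Measurable F := (bvn_meas μ1 μ2 σ1 σ2 ρ).ennreal_ofReal
  have hS : MeasurableSet {p : ℝ × ℝ | p.2 ∈ B ∧ p.1 / p.2 ∈ A} :=
    (measurable_snd hB).inter ((measurable_fst.div measurable_snd) hA)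
  set S : Set (ℝ × ℝ) := {p : ℝ × ℝ | p.2 ∈ B ∧ p.1 / p.2 ∈ A} with hSdef
  have step1 : ∫⁻ p in S, F p = ∫⁻ s, ∫⁻ s1, S.indicator F (s1, s) := by
    rw [← lintegral_indicator hS F, MeasureTheory.Measure.volume_eq_prod]
    exact MeasureTheory.lintegral_prod_symm' (S.indicator F) (hFmeas.indicator hS)
  have step2 : ∀ s : ℝ, (∫⁻ s1, S.indicator F (s1, s)) =
      B.indicator (fun s => ∫⁻ t in A, ENNReal.ofReal (|s| * bvnDensity μ1 μ2 σ1 σ2 ρ (t * s) s)) s := by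
    intro s
    by_cases hs : s ∈ B
    · have hs0 : s ≠ 0 := fun h => hB0 (h ▸ hs)
      rw [Set.indicator_of_mem hs]
      have heq : (fun s1 => S.indicator F (s1, s)) =
          fun s1 => ((fun y => y / s) ⁻¹' A).indicator (fun y => ENNReal.ofReal (bvnDensity μ1 μ2 σ1 σ2 ρ y s)) s1 := by
        funext s1
        by_cases h1 : s1 / s ∈ A
        · rw [Set.indicator_of_mem (by exact ⟨hs, h1⟩ : (s1, s) ∈ S),
            Set.indicator_of_mem (by exact h1)]
        · rw [Set.indicator_of_notMem (fun h => h1 h.2),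
            Set.indicator_of_notMem (by exact h1)]
      rw [heq]
      have hAs : MeasurableSet ((fun y => y / s) ⁻¹' A) := (measurable_id.div_const s) hA
      rw [lintegral_indicator hAs]
      have hmg : Measurable (fun y : ℝ => ENNReal.ofReal (bvnDensity μ1 μ2 σ1 σ2 ρ y s)) := by
        unfold bvnDensity; fun_prop
      calc ∫⁻ y in (fun y => y / s) ⁻¹' A, ENNReal.ofReal (bvnDensity μ1 μ2 σ1 σ2 ρ y s)
          = ∫⁻ y in (fun y => y / s) ⁻¹' A, ENNReal.ofReal (bvnDensity μ1 μ2 σ1 σ2 ρ y s)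
            ∂(ENNReal.ofReal |s| • Measure.map (· * s) volume) := by
            rw [Real.smul_map_volume_mul_right hs0]
        _ = ENNReal.ofReal |s| * ∫⁻ y in (fun y => y / s) ⁻¹' A, ENNReal.ofReal (bvnDensity μ1 μ2 σ1 σ2 ρ y s)
            ∂(Measure.map (· * s) volume) := by
            rw [Measure.restrict_smul, lintegral_smul_measure, smul_eq_mul]
        _ = ENNReal.ofReal |s| * ∫⁻ t in (· * s) ⁻¹' ((fun y => y / s) ⁻¹' A),
              ENNReal.ofReal (bvnDensity μ1 μ2 σ1 σ2 ρ (t * s) s) := by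
            rw [setLIntegral_map (hAs) hmg (measurable_mul_const s)]
        _ = ENNReal.ofReal |s| * ∫⁻ t in A, ENNReal.ofReal (bvnDensity μ1 μ2 σ1 σ2 ρ (t * s) s) := by
            have hset : (· * s) ⁻¹' ((fun y => y / s) ⁻¹' A) = A := by
              ext t; simp [mul_div_cancel_right₀ _ hs0]
            rw [hset]
        _ = ∫⁻ t in A, ENNReal.ofReal (|s| * bvnDensity μ1 μ2 σ1 σ2 ρ (t * s) s) := by
            rw [← lintegral_const_mul (ENNReal.ofReal |s|) (by unfold bvnDensity; fun_prop)]
            congr 1; funext t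
            rw [← ENNReal.ofReal_mul (abs_nonneg s)]
    · rw [Set.indicator_of_notMem hs]
      have : ∀ s1 : ℝ, S.indicator F (s1, s) = 0 := fun s1 =>
        Set.indicator_of_notMem (fun h => hs h.1) _
      simp [this]
  calc ∫⁻ p in S, F p
      = ∫⁻ s, B.indicator (fun s => ∫⁻ t in A, ENNReal.ofReal (|s| * bvnDensity μ1 μ2 σ1 σ2 ρ (t * s) s)) s := by
        rw [step1]; exact lintegral_congr step2
    _ = ∫⁻ s in B, ∫⁻ t in A, ENNReal.ofReal (|s| * bvnDensity μ1 μ2 σ1 σ2 ρ (t * s) s) := by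
        rw [lintegral_indicator hB]
    _ = ∫⁻ t in A, ∫⁻ s in B, ENNReal.ofReal (|s| * bvnDensity μ1 μ2 σ1 σ2 ρ (t * s) s) :=
        lintegral_lintegral_swap (bvn_meas_uncurry μ1 μ2 σ1 σ2 ρ).aemeasurable

lemma bvn_G_eq (μ1 μ2 σ1 σ2 ρ : ℝ) (hσ1 : 0 < σ1) (hσ2 : 0 < σ2)
    (hρ : ρ ∈ Set.Ioo (-1 : ℝ) 1) (t : ℝ) :
    (∫⁻ s in Set.Ioi (0:ℝ), ENNReal.ofReal (|s| * bvnDensity μ1 μ2 σ1 σ2 ρ (t * s) s)) +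
      (∫⁻ s in Set.Iio (0:ℝ), ENNReal.ofReal (|s| * bvnDensity μ1 μ2 σ1 σ2 ρ (t * s) s)) =
    ENNReal.ofReal ((∫ s in Set.Ioi (0:ℝ), s * bvnDensity μ1 μ2 σ1 σ2 ρ (t * s) s) +
      -∫ s in Set.Iio (0:ℝ), s * bvnDensity μ1 μ2 σ1 σ2 ρ (t * s) s) := by
  have hInt := bvn_slice_integrable μ1 μ2 σ1 σ2 ρ hσ1 hσ2 hρ t
  have hnn : ∀ s1 s2, 0 ≤ bvnDensity μ1 μ2 σ1 σ2 ρ s1 s2 := bvn_nonneg μ1 μ2 σ1 σ2 ρ hσ1 hσ2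
  -- positive part
  have hIntPos : IntegrableOn (fun s => s * bvnDensity μ1 μ2 σ1 σ2 ρ (t * s) s) (Set.Ioi 0) :=
    hInt.integrableOn.congr_fun (fun s hs => by beta_reduce; rw [abs_of_pos hs]) measurableSet_Ioi
  have hIntNeg : IntegrableOn (fun s => -(s * bvnDensity μ1 μ2 σ1 σ2 ρ (t * s) s)) (Set.Iio 0) :=
    hInt.integrableOn.congr_fun
      (fun s hs => by beta_reduce; rw [abs_of_neg hs]; ring) measurableSet_Iio
  have e1 : (∫⁻ s in Set.Ioi (0:ℝ), ENNReal.ofReal (|s| * bvnDensity μ1 μ2 σ1 σ2 ρ (t * s) s)) =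
      ENNReal.ofReal (∫ s in Set.Ioi (0:ℝ), s * bvnDensity μ1 μ2 σ1 σ2 ρ (t * s) s) := by
    rw [ofReal_integral_eq_lintegral_ofReal hIntPos
      ((ae_restrict_iff' measurableSet_Ioi).mpr (Filter.Eventually.of_forall
        fun s hs => mul_nonneg (le_of_lt hs) (hnn _ _)))]
    apply setLIntegral_congr_fun measurableSet_Ioi
    exact fun s hs => by beta_reduce; rw [abs_of_pos hs]
  have e2 : (∫⁻ s in Set.Iio (0:ℝ), ENNReal.ofReal (|s| * bvnDensity μ1 μ2 σ1 σ2 ρ (t * s) s)) =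
      ENNReal.ofReal (∫ s in Set.Iio (0:ℝ), -(s * bvnDensity μ1 μ2 σ1 σ2 ρ (t * s) s)) := by
    rw [ofReal_integral_eq_lintegral_ofReal hIntNeg
      ((ae_restrict_iff' measurableSet_Iio).mpr (Filter.Eventually.of_forall
        fun s hs => by
          show (0:ℝ) ≤ -(s * bvnDensity μ1 μ2 σ1 σ2 ρ (t * s) s)
          have := mul_nonneg (neg_nonneg.mpr (le_of_lt hs)) (hnn (t*s) s)
          nlinarith))]
    apply setLIntegral_congr_fun measurableSet_Iio
    exact fun s hs => by beta_reduce; rw [abs_of_neg hs]; ring_nf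
  rw [e1, e2, integral_neg, ← ENNReal.ofReal_add]
  · exact setIntegral_nonneg measurableSet_Ioi fun s hs => mul_nonneg (le_of_lt hs) (hnn _ _)
  · rw [← integral_neg]
    exact setIntegral_nonneg measurableSet_Iio fun s hs => by
      show (0:ℝ) ≤ -(s * bvnDensity μ1 μ2 σ1 σ2 ρ (t * s) s)
      have := mul_nonneg (neg_nonneg.mpr (le_of_lt hs)) (hnn (t*s) s)
      nlinarith

theorem quotient_unconditioned_density
    {Ω : Type*} [MeasurableSpace Ω] (P : Measure Ω) [IsProbabilityMeasure P]
    (X1 X2 : Ω → ℝ) (hX : Measurable fun ω => (X1 ω, X2 ω))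
    (μ1 μ2 σ1 σ2 ρ : ℝ) (hσ1 : 0 < σ1) (hσ2 : 0 < σ2) (hρ : ρ ∈ Set.Ioo (-1 : ℝ) 1)
    (hlaw : Measure.map (fun ω => (X1 ω, X2 ω)) P =
      volume.withDensity fun p => ENNReal.ofReal (bvnDensity μ1 μ2 σ1 σ2 ρ p.1 p.2)) :
    (∀ x : ℝ,
      P {ω | 0 < X2 ω ∧ X1 ω ≤ x * X2 ω} + P {ω | X2 ω < 0 ∧ x * X2 ω ≤ X1 ω} =
        ENNReal.ofReal (∫ t in Set.Iic x,
          ((∫ s in Set.Ioi (0 : ℝ), s * bvnDensity μ1 μ2 σ1 σ2 ρ (t * s) s) +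
            -∫ s in Set.Iio (0 : ℝ), s * bvnDensity μ1 μ2 σ1 σ2 ρ (t * s) s))) ∧
    Measure.map (fun ω => X1 ω / X2 ω) P =
      volume.withDensity fun t => ENNReal.ofReal
        ((∫ s in Set.Ioi (0 : ℝ), s * bvnDensity μ1 μ2 σ1 σ2 ρ (t * s) s) +
          -∫ s in Set.Iio (0 : ℝ), s * bvnDensity μ1 μ2 σ1 σ2 ρ (t * s) s) := by
  -- abbreviations
  set G1 : ℝ → ENNReal := fun t => ∫⁻ s in Set.Ioi (0:ℝ),
    ENNReal.ofReal (|s| * bvnDensity μ1 μ2 σ1 σ2 ρ (t * s) s) with hG1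
  set G2 : ℝ → ENNReal := fun t => ∫⁻ s in Set.Iio (0:ℝ),
    ENNReal.ofReal (|s| * bvnDensity μ1 μ2 σ1 σ2 ρ (t * s) s) with hG2
  set h : ℝ → ℝ := fun t => (∫ s in Set.Ioi (0 : ℝ), s * bvnDensity μ1 μ2 σ1 σ2 ρ (t * s) s) +
      -∫ s in Set.Iio (0 : ℝ), s * bvnDensity μ1 μ2 σ1 σ2 ρ (t * s) s with hh
  have key : ∀ t, G1 t + G2 t = ENNReal.ofReal (h t) :=
    fun t => bvn_G_eq μ1 μ2 σ1 σ2 ρ hσ1 hσ2 hρ t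
  have hBmeas : Measurable (Function.uncurry fun t s : ℝ =>
      ENNReal.ofReal (|s| * bvnDensity μ1 μ2 σ1 σ2 ρ (t * s) s)) := by
    unfold bvnDensity Function.uncurry; fun_prop
  have hG1meas : Measurable G1 := Measurable.lintegral_prod_right hBmeas
  have hG2meas : Measurable G2 := Measurable.lintegral_prod_right hBmeas
  -- pushforward formula
  have νT : ∀ {T : Set (ℝ × ℝ)}, MeasurableSet T →
      P ((fun ω => (X1 ω, X2 ω)) ⁻¹' T) =
        ∫⁻ p in T, ENNReal.ofReal (bvnDensity μ1 μ2 σ1 σ2 ρ p.1 p.2) := by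
    intro T hT
    rw [← Measure.map_apply hX hT, hlaw, withDensity_apply _ hT]
  have hIoi0 : (0:ℝ) ∉ Set.Ioi (0:ℝ) := by simp
  have hIio0 : (0:ℝ) ∉ Set.Iio (0:ℝ) := by simp
  -- bounds for integrability
  have hbound : ∀ {A : Set ℝ}, MeasurableSet A → (∫⁻ t in A, (G1 t + G2 t)) ≤ 2 := by
    intro A hA
    have b1 : (∫⁻ t in A, G1 t) ≤ 1 := by
      rw [← bvn_core μ1 μ2 σ1 σ2 ρ measurableSet_Ioi hIoi0 hA]
      have hS : MeasurableSet {p : ℝ × ℝ | p.2 ∈ Set.Ioi (0:ℝ) ∧ p.1 / p.2 ∈ A} :=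
        (measurable_snd measurableSet_Ioi).inter ((measurable_fst.div measurable_snd) hA)
      rw [← νT hS]
      exact prob_le_one
    have b2 : (∫⁻ t in A, G2 t) ≤ 1 := by
      rw [← bvn_core μ1 μ2 σ1 σ2 ρ measurableSet_Iio hIio0 hA]
      have hS : MeasurableSet {p : ℝ × ℝ | p.2 ∈ Set.Iio (0:ℝ) ∧ p.1 / p.2 ∈ A} :=
        (measurable_snd measurableSet_Iio).inter ((measurable_fst.div measurable_snd) hA)
      rw [← νT hS]
      exact prob_le_one
    calc (∫⁻ t in A, (G1 t + G2 t)) = (∫⁻ t in A, G1 t) + ∫⁻ t in A, G2 t :=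
          lintegral_add_left (hG1meas) _
      _ ≤ 1 + 1 := add_le_add b1 b2
      _ = 2 := by norm_num
  have hhnn : ∀ t, 0 ≤ h t := by
    intro t
    have h1 : 0 ≤ ∫ s in Set.Ioi (0:ℝ), s * bvnDensity μ1 μ2 σ1 σ2 ρ (t * s) s :=
      setIntegral_nonneg measurableSet_Ioi fun s hs =>
        mul_nonneg (le_of_lt hs) (bvn_nonneg μ1 μ2 σ1 σ2 ρ hσ1 hσ2 _ _)
    have h2 : (∫ s in Set.Iio (0:ℝ), s * bvnDensity μ1 μ2 σ1 σ2 ρ (t * s) s) ≤ 0 := by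
      rw [← neg_nonneg, ← integral_neg]
      exact setIntegral_nonneg measurableSet_Iio fun s hs => by
        show (0:ℝ) ≤ -(s * bvnDensity μ1 μ2 σ1 σ2 ρ (t * s) s)
        have := mul_nonneg (neg_nonneg.mpr (le_of_lt hs))
          (bvn_nonneg μ1 μ2 σ1 σ2 ρ hσ1 hσ2 (t*s) s)
        nlinarith
    simp only [hh]
    linarith
  have hhmeas : Measurable h := by
    have : h = fun t => (G1 t + G2 t).toReal := by
      funext t
      rw [key t, ENNReal.toReal_ofReal (hhnn t)]
    rw [this]
    exact (hG1meas.add hG2meas).ennreal_toReal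
  have hhint : ∀ {A : Set ℝ}, MeasurableSet A → IntegrableOn h A := by
    intro A hA
    constructor
    · exact hhmeas.aestronglyMeasurable
    · rw [hasFiniteIntegral_iff_ofReal (Filter.Eventually.of_forall hhnn)]
      calc (∫⁻ t in A, ENNReal.ofReal (h t)) = ∫⁻ t in A, (G1 t + G2 t) := by
            apply lintegral_congr; intro t; rw [key t]
        _ ≤ 2 := hbound hA
        _ < ⊤ := by norm_num
  have main : ∀ {A : Set ℝ}, MeasurableSet A →
      (∫⁻ t in A, (G1 t + G2 t)) = ENNReal.ofReal (∫ t in A, h t) := by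
    intro A hA
    rw [ofReal_integral_eq_lintegral_ofReal (hhint hA)
      (Filter.Eventually.of_forall hhnn)]
    apply lintegral_congr; intro t; rw [key t]
  constructor
  · -- part 1
    intro x
    have hpre1 : {ω | 0 < X2 ω ∧ X1 ω ≤ x * X2 ω} =
        (fun ω => (X1 ω, X2 ω)) ⁻¹' {p : ℝ × ℝ | p.2 ∈ Set.Ioi (0:ℝ) ∧ p.1 / p.2 ∈ Set.Iic x} := by
      ext ω
      simp only [Set.mem_setOf_eq, Set.mem_preimage, Set.mem_Ioi, Set.mem_Iic]
      constructor
      · rintro ⟨h1, h2⟩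
        exact ⟨h1, by rw [div_le_iff₀ h1]; linarith⟩
      · rintro ⟨h1, h2⟩
        rw [div_le_iff₀ h1] at h2
        exact ⟨h1, by linarith⟩
    have hpre2 : {ω | X2 ω < 0 ∧ x * X2 ω ≤ X1 ω} =
        (fun ω => (X1 ω, X2 ω)) ⁻¹' {p : ℝ × ℝ | p.2 ∈ Set.Iio (0:ℝ) ∧ p.1 / p.2 ∈ Set.Iic x} := by
      ext ω
      simp only [Set.mem_setOf_eq, Set.mem_preimage, Set.mem_Iio, Set.mem_Iic]
      constructor
      · rintro ⟨h1, h2⟩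
        exact ⟨h1, by rw [div_le_iff_of_neg h1]; linarith⟩
      · rintro ⟨h1, h2⟩
        rw [div_le_iff_of_neg h1] at h2
        exact ⟨h1, by linarith⟩
    have hS1 : MeasurableSet {p : ℝ × ℝ | p.2 ∈ Set.Ioi (0:ℝ) ∧ p.1 / p.2 ∈ Set.Iic x} :=
      (measurable_snd measurableSet_Ioi).inter ((measurable_fst.div measurable_snd) measurableSet_Iic)
    have hS2 : MeasurableSet {p : ℝ × ℝ | p.2 ∈ Set.Iio (0:ℝ) ∧ p.1 / p.2 ∈ Set.Iic x} :=
      (measurable_snd measurableSet_Iio).inter ((measurable_fst.div measurable_snd) measurableSet_Iic)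
    rw [hpre1, hpre2, νT hS1, νT hS2,
      bvn_core μ1 μ2 σ1 σ2 ρ measurableSet_Ioi hIoi0 measurableSet_Iic,
      bvn_core μ1 μ2 σ1 σ2 ρ measurableSet_Iio hIio0 measurableSet_Iic]
    rw [← lintegral_add_left hG1meas]
    exact main measurableSet_Iic
  · -- part 2
    have hdiv : Measurable (fun ω => X1 ω / X2 ω) :=
      Measurable.div (measurable_fst.comp hX) (measurable_snd.comp hX)
    ext A hA
    rw [Measure.map_apply hdiv hA, withDensity_apply _ hA]
    have hT' : MeasurableSet {p : ℝ × ℝ | p.2 ∈ Set.Ioi (0:ℝ) ∪ Set.Iio (0:ℝ) ∧ p.1 / p.2 ∈ A} :=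
      (measurable_snd (measurableSet_Ioi.union measurableSet_Iio)).inter
        ((measurable_fst.div measurable_snd) hA)
    have hT0 : MeasurableSet {p : ℝ × ℝ | p.2 = 0 ∧ p.1 / p.2 ∈ A} :=
      (measurable_snd (measurableSet_singleton 0)).inter
        ((measurable_fst.div measurable_snd) hA)
    have hpre : (fun ω => X1 ω / X2 ω) ⁻¹' A =
        (fun ω => (X1 ω, X2 ω)) ⁻¹' ({p : ℝ × ℝ | p.2 ∈ Set.Ioi (0:ℝ) ∪ Set.Iio (0:ℝ) ∧ p.1 / p.2 ∈ A}
          ∪ {p : ℝ × ℝ | p.2 = 0 ∧ p.1 / p.2 ∈ A}) := by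
      ext ω
      simp only [Set.mem_preimage, Set.mem_union, Set.mem_setOf_eq, Set.mem_Ioi, Set.mem_Iio]
      constructor
      · intro hmem
        rcases lt_trichotomy (X2 ω) 0 with hlt | heq | hgt
        · exact Or.inl ⟨Or.inr hlt, hmem⟩
        · exact Or.inr ⟨heq, hmem⟩
        · exact Or.inl ⟨Or.inl hgt, hmem⟩
      · rintro (⟨_, hmem⟩ | ⟨_, hmem⟩) <;> exact hmem
    rw [hpre, νT (hT'.union hT0), lintegral_union hT0 ?disj]
    case disj =>
      rw [Set.disjoint_left]
      rintro p ⟨hp, -⟩ ⟨hp0, -⟩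
      rcases hp with hp | hp
      · exact absurd hp0 (ne_of_gt hp)
      · exact absurd hp0 (ne_of_lt hp)
    have hnull : (∫⁻ p in {p : ℝ × ℝ | p.2 = 0 ∧ p.1 / p.2 ∈ A},
        ENNReal.ofReal (bvnDensity μ1 μ2 σ1 σ2 ρ p.1 p.2)) = 0 := by
      apply setLIntegral_measure_zero
      refine measure_mono_null (t := Set.univ ×ˢ ({0} : Set ℝ)) ?_ ?_
      · intro p hp
        simp only [Set.mem_prod, Set.mem_univ, Set.mem_singleton_iff]
        exact ⟨trivial, hp.1⟩
      · rw [MeasureTheory.Measure.volume_eq_prod, Measure.prod_prod]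
        simp
    rw [hnull, add_zero,
      bvn_core μ1 μ2 σ1 σ2 ρ (measurableSet_Ioi.union measurableSet_Iio) (by simp) hA]
    have inner : ∀ t : ℝ, (∫⁻ s in Set.Ioi (0:ℝ) ∪ Set.Iio (0:ℝ),
        ENNReal.ofReal (|s| * bvnDensity μ1 μ2 σ1 σ2 ρ (t * s) s)) = G1 t + G2 t := by
      intro t
      refine lintegral_union measurableSet_Iio ?_
      rw [Set.disjoint_left]
      intro a ha ha'
      exact absurd (lt_trans ha' ha) (lt_irrefl a)
    calc (∫⁻ t in A, ∫⁻ s in Set.Ioi (0:ℝ) ∪ Set.Iio (0:ℝ),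
          ENNReal.ofReal (|s| * bvnDensity μ1 μ2 σ1 σ2 ρ (t * s) s))
        = ∫⁻ t in A, (G1 t + G2 t) := by
          apply lintegral_congr; intro t; rw [inner t]
      _ = ENNReal.ofReal (∫ t in A, h t) := main hA
      _ = ∫⁻ t in A, ENNReal.ofReal (h t) := by
          rw [ofReal_integral_eq_lintegral_ofReal (hhint hA) (Filter.Eventually.of_forall hhnn)]
end
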